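/- arXiv:1608.05548 — 5 statements merged into one kernel-verified Lean document; each statement's English description precedes it below -/
import Mathlib

section
/- Goal-oriented reduction preserves minimal traces (Theorem 1): Let (Σ,S,T) be an automata network, s a global state with s(a) = a_0 for every a ∈ Σ, and g_⊤ ∈ S(g) a goal local state with g_0 ≠ g_⊤. Then for every trace π from s that is minimal w.r.t. g_⊤ reachability, every transition occurring in π belongs to tr(B), i.e., tr(π) ⊆ tr(B). -/
/-!
Automata networks (ANs), steps, traces, minimal traces, local causality analysis
and the goal-oriented reduction, following Paulevé, "Goal-Oriented Reduction of
Automata Networks".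
-/

universe u v

/-- An automata network: a finite set of automata identifiers, each with a
finite set of local states.  (The transition relation is given separately,
as a `TransMap`.) -/
structure AN : Type (max (u + 1) (v + 1)) where
  /-- automata identifiers -/
  Auto : Type u
  /-- local states of each automaton -/
  LS : Auto → Type v
  [decAuto : DecidableEq Auto]
  [fintypeAuto : Fintype Auto]
  [decLS : ∀ a, DecidableEq (LS a)]
  [fintypeLS : ∀ a, Fintype (LS a)]

attribute [instance] AN.decAuto AN.fintypeAuto AN.decLS AN.fintypeLS

namespace AN

variable (N : AN)

/-- The type of all local states, each recording its automaton. -/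
abbrev LSt := Σ a : N.Auto, N.LS a

/-- Global states: one local state per automaton. -/
abbrev GState := ∀ a : N.Auto, N.LS a

/-- A local transition of automaton `a`: an origin and a destination local
state of `a` (distinct), together with an enabling condition giving at most
one local state per automaton, and none for `a` itself. -/
structure Trans (a : N.Auto) where
  orig : N.LS a
  dest : N.LS a
  orig_ne_dest : orig ≠ dest
  enab : ∀ b : N.Auto, Option (N.LS b)
  enab_self : enab a = none

/-- The transition relation `T`: a set of local transitions per automaton. -/
abbrev TransMap := ∀ a : N.Auto, Set (N.Trans a)

variable {N}

/-- Pre-condition `•t` of a local transition. -/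
def Trans.preSet {a : N.Auto} (t : N.Trans a) : Set N.LSt :=
  insert ⟨a, t.orig⟩ {p | t.enab p.1 = some p.2}

/-- Post-condition `t•` of a local transition. -/
def Trans.postSet {a : N.Auto} (t : N.Trans a) : Set N.LSt :=
  insert ⟨a, t.dest⟩ {p | t.enab p.1 = some p.2}

variable (N)

/-- A step: a set of local transitions with at most one transition per
automaton. -/
abbrev Step := ∀ a : N.Auto, Option (N.Trans a)

variable {N}

/-- Pre-condition `•τ` of a step. -/
def Step.pre (τ : Step N) : Set N.LSt :=
  ⋃ (b : N.Auto), ⋃ (t : N.Trans b), ⋃ (_ : τ b = some t), t.preSet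

/-- Post-condition `τ•` of a step. -/
def Step.post (τ : Step N) : Set N.LSt :=
  (⋃ (b : N.Auto), ⋃ (t : N.Trans b), ⋃ (_ : τ b = some t), t.postSet) \
    {p | ∃ t : N.Trans p.1, τ p.1 = some t ∧ p.2 = t.orig}

/-- `σ` is a sub-step of `τ` (inclusion of sets of transitions). -/
def Step.Sub (σ τ : Step N) : Prop :=
  ∀ ⦃a : N.Auto⦄ ⦃t : N.Trans a⦄, σ a = some t → τ a = some t

/-- The step only uses transitions of `T`. -/
def Step.Wf (T : TransMap N) (τ : Step N) : Prop :=
  ∀ ⦃a : N.Auto⦄ ⦃t : N.Trans a⦄, τ a = some t → t ∈ T a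

/-- A step `τ` is playable in `s` iff `•τ ⊆ s`. -/
def Playable (s : GState N) (τ : Step N) : Prop :=
  ∀ p ∈ τ.pre, s p.1 = p.2

/-- `s·τ`: the global state after applying step `τ` in `s`. -/
def applyStep (s : GState N) (τ : Step N) : GState N :=
  fun a => (τ a).elim (s a) Trans.dest

/-- The global state after applying a sequence of steps. -/
def applyTrace (s : GState N) (π : List (Step N)) : GState N :=
  π.foldl applyStep s

/-- `π` is a trace from `s` (of the network with transitions `T`): a finite
sequence of successively playable steps. -/
def IsTrace (T : TransMap N) (s : GState N) (π : List (Step N)) : Prop :=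
  ∀ i (h : i < π.length),
    (π.get ⟨i, h⟩).Wf T ∧ Playable (applyTrace s (π.take i)) (π.get ⟨i, h⟩)

/-- Post-condition `post(π)` of a trace: `⟨a, x⟩ ∈ post(π)` iff `⟨a, x⟩` is in
the post-condition of some step and no later step has a local state of
automaton `a` in its post-condition. -/
def tracePost (π : List (Step N)) : Set N.LSt :=
  {p | ∃ n, ∃ hn : n < π.length, p ∈ (π.get ⟨n, hn⟩).post ∧
    ∀ m (hm : m < π.length), n < m →
      ∀ x : N.LS p.1, (⟨p.1, x⟩ : N.LSt) ∉ (π.get ⟨m, hm⟩).post}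

/-- Local states of automaton `a` in the post-condition of a trace. -/
def postProj (π : List (Step N)) (a : N.Auto) : Set (N.LS a) :=
  {x | (⟨a, x⟩ : N.LSt) ∈ tracePost π}

/-- `tr(π)`: the set of transitions composing a trace. -/
def traceTrans (π : List (Step N)) : Set (Σ a : N.Auto, N.Trans a) :=
  {q | ∃ τ ∈ π, τ q.1 = some q.2}

/-- `ϖ` is a sub-trace of `π`: there is a strictly order-preserving injection
`φ` of the steps of `ϖ` into those of `π` with `ϖ^i ⊆ π^{φ(i)}`. -/
def SubTrace (ϖ π : List (Step N)) : Prop :=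
  ∃ φ : Fin ϖ.length → Fin π.length, StrictMono φ ∧
    ∀ i : Fin ϖ.length, (ϖ.get i).Sub (π.get (φ i))

/-- `π` is a minimal trace from `s` w.r.t. the reachability of the local state
`p`. -/
def MinimalTrace (T : TransMap N) (s : GState N) (p : N.LSt)
    (π : List (Step N)) : Prop :=
  IsTrace T s π ∧ p ∈ tracePost π ∧
    ¬ ∃ ϖ : List (Step N), IsTrace T s ϖ ∧ ϖ ≠ π ∧ ϖ.length ≤ π.length ∧
      p ∈ tracePost ϖ ∧ SubTrace ϖ π

/-- The local state `p` is reachable from `s`. -/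
def Reachable (T : TransMap N) (s : GState N) (p : N.LSt) : Prop :=
  s p.1 = p.2 ∨ ∃ π : List (Step N), IsTrace T s π ∧ p ∈ tracePost π

/-- `η ∈ local-paths(a_i ↝ a_j)`: local acyclic paths of automaton `a` from
`i` to `j`, using transitions of `T`. -/
def IsLocalPath (T : TransMap N) {a : N.Auto} (i j : N.LS a)
    (η : List (N.Trans a)) : Prop :=
  (∀ t ∈ η, t ∈ T a) ∧
    ((i = j ∧ η = []) ∨
     (i ≠ j ∧ ∃ hne : η ≠ [],
       (η.head hne).orig = i ∧ (η.getLast hne).dest = j ∧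
       (∀ n : ℕ, ∀ h : n + 1 < η.length,
         (η.get ⟨n, Nat.lt_of_succ_lt h⟩).dest = (η.get ⟨n + 1, h⟩).orig) ∧
       (∀ n m : Fin η.length, m < n → (η.get n).dest ≠ (η.get m).orig)))

variable (N)

/-- Objectives `a_i ↝ a_j`: pairs of local states of a same automaton. -/
abbrev Obj := Σ a : N.Auto, N.LS a × N.LS a

variable {N}

/-- The operator `F` on sets of objectives: `a_i ↝ a_j ∈ F(Ω)` iff some local
acyclic path from `i` to `j` has all the objectives from the initial state `s`
to its enabling conditions already in `Ω`. -/
def Fop (T : TransMap N) (s : GState N) (Ω : Set (Obj N)) : Set (Obj N) :=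
  {P | ∃ η : List (N.Trans P.1), IsLocalPath T P.2.1 P.2.2 η ∧
    ∀ t ∈ η, ∀ (b : N.Auto) (k : N.LS b), t.enab b = some k →
      (⟨b, (s b, k)⟩ : Obj N) ∈ Ω}

/-- `rcsol_s(P)` (with validity given by the set `Ω` of valid objectives):
local acyclic paths for `P` whose enabling conditions only involve valid
objectives from the initial state `s`. -/
def rcsol (T : TransMap N) (s : GState N) (Ω : Set (Obj N)) (P : Obj N) :
    Set (List (N.Trans P.1)) :=
  {η | IsLocalPath T P.2.1 P.2.2 η ∧
    ∀ t ∈ η, ∀ (b : N.Auto) (k : N.LS b), t.enab b = some k →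
      (⟨b, (s b, k)⟩ : Obj N) ∈ Ω}

/-- `tr(rcsol_s(P))`: the transitions of the filtered local paths of `P`. -/
def rcsolTr (T : TransMap N) (s : GState N) (Ω : Set (Obj N)) (P : Obj N) :
    Set (N.Trans P.1) :=
  {t | ∃ η ∈ rcsol T s Ω P, t ∈ η}

/-- `tr(B)`: the transitions of the filtered local paths of the objectives
in `B`. -/
def trB (T : TransMap N) (s : GState N) (Ω : Set (Obj N)) (B : Set (Obj N)) :
    Set (Σ a : N.Auto, N.Trans a) :=
  {q | ∃ i j : N.LS q.1, (⟨q.1, (i, j)⟩ : Obj N) ∈ B ∧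
    q.2 ∈ rcsolTr T s Ω (⟨q.1, (i, j)⟩ : Obj N)}

/-- The closure conditions defining the set `B` of collected objectives for
the goal `g_⊤` from the initial state `s` (so that `a_0 = s a` for each
automaton `a`):
(1) `g_0 ↝ g_⊤ ∈ B`;
(2) if `b_j →^ℓ b_k ∈ tr(B)` then `a_0 ↝ a_i ∈ B` for every `a_i ∈ ℓ`;
(3) if `b_j →^ℓ b_k ∈ tr(B)` and `b_⋆ ↝ b_i ∈ B` then `b_k ↝ b_i ∈ B`. -/
def BClosed (T : TransMap N) (s : GState N) (Ω : Set (Obj N))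
    (g : N.Auto) (gtop : N.LS g) (B : Set (Obj N)) : Prop :=
  (⟨g, (s g, gtop)⟩ : Obj N) ∈ B ∧
  (∀ (b : N.Auto) (t : N.Trans b),
      (⟨b, t⟩ : Σ a : N.Auto, N.Trans a) ∈ trB T s Ω B →
    ∀ (a : N.Auto) (i : N.LS a), t.enab a = some i →
      (⟨a, (s a, i)⟩ : Obj N) ∈ B) ∧
  (∀ (b : N.Auto) (t : N.Trans b),
      (⟨b, t⟩ : Σ a : N.Auto, N.Trans a) ∈ trB T s Ω B →
    ∀ bs bi : N.LS b, (⟨b, (bs, bi)⟩ : Obj N) ∈ B →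
      (⟨b, (t.dest, bi)⟩ : Obj N) ∈ B)

end AN


namespace GOR

open AN

open scoped Classical

variable {N : AN}

/-- The step at index `i` of a trace, the empty step beyond the end. -/
noncomputable def stepAt (π : List (Step N)) (i : ℕ) : Step N :=
  π.getD i (fun _ => none)

/-- The state after `n` steps. -/
noncomputable def stN (s : GState N) (π : List (Step N)) : ℕ → GState N
  | 0 => s
  | n+1 => applyStep (stN s π n) (stepAt π n)

lemma stepAt_eq_get (π : List (Step N)) {i : ℕ} (h : i < π.length) :
    stepAt π i = π.get ⟨i, h⟩ := by
  simp [stepAt, List.getD_eq_getElem?_getD, List.getElem?_eq_getElem h]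

lemma stepAt_eq_none (π : List (Step N)) {i : ℕ} (h : π.length ≤ i) :
    stepAt π i = (fun _ => none) := by
  simp [stepAt, List.getD_eq_getElem?_getD, List.getElem?_eq_none h]

lemma applyStep_some {s : GState N} {τ : Step N} {a : N.Auto} {t : N.Trans a}
    (h : τ a = some t) : applyStep s τ a = t.dest := by
  simp [applyStep, h]

lemma applyStep_none {s : GState N} {τ : Step N} {a : N.Auto}
    (h : τ a = none) : applyStep s τ a = s a := by
  simp [applyStep, h]

lemma stN_succ_some {s : GState N} {π : List (Step N)} {n : ℕ} {a : N.Auto}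
    {t : N.Trans a} (h : stepAt π n a = some t) :
    stN s π (n+1) a = t.dest := applyStep_some h

lemma stN_succ_none {s : GState N} {π : List (Step N)} {n : ℕ} {a : N.Auto}
    (h : stepAt π n a = none) : stN s π (n+1) a = stN s π n a := applyStep_none h

lemma stepAt_some_lt {π : List (Step N)} {n : ℕ} {a : N.Auto} {t : N.Trans a}
    (h : stepAt π n a = some t) : n < π.length := by
  by_contra hn
  rw [stepAt_eq_none π (le_of_not_gt hn)] at h
  cases h

lemma stN_eq_applyTrace (s : GState N) (π : List (Step N)) :
    ∀ n, stN s π n = applyTrace s (π.take n) := by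
  intro n
  induction n with
  | zero => simp [stN, applyTrace]
  | succ n ih =>
    by_cases h : n < π.length
    · have h2 : π.take (n+1) = π.take n ++ [π.get ⟨n, h⟩] := by
        rw [List.take_succ]
        simp [List.getElem?_eq_getElem h, List.get_eq_getElem]
      rw [h2]
      show applyStep (stN s π n) (stepAt π n) = List.foldl applyStep s (π.take n ++ [π.get ⟨n, h⟩])
      rw [List.foldl_append, stepAt_eq_get π h, ih]
      rfl
    · push_neg at h
      have h1 : π.take (n+1) = π.take n := by
        rw [List.take_of_length_le h, List.take_of_length_le (le_trans h (Nat.le_succ n))]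
      show applyStep (stN s π n) (stepAt π n) = _
      rw [stepAt_eq_none π h, h1, ← ih]
      funext a
      exact applyStep_none rfl

lemma mem_pre_orig {τ : Step N} {b : N.Auto} {t : N.Trans b} (h : τ b = some t) :
    (⟨b, t.orig⟩ : LSt N) ∈ τ.pre := by
  refine Set.mem_iUnion.2 ⟨b, Set.mem_iUnion.2 ⟨t, Set.mem_iUnion.2 ⟨h, ?_⟩⟩⟩
  exact Set.mem_insert _ _

lemma mem_pre_enab {τ : Step N} {b c : N.Auto} {t : N.Trans b} {k : N.LS c}
    (h : τ b = some t) (hc : t.enab c = some k) :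
    (⟨c, k⟩ : LSt N) ∈ τ.pre := by
  refine Set.mem_iUnion.2 ⟨b, Set.mem_iUnion.2 ⟨t, Set.mem_iUnion.2 ⟨h, ?_⟩⟩⟩
  exact Set.mem_insert_of_mem _ hc

section Traces

variable {T : TransMap N} {s : GState N} {π : List (Step N)}

lemma playable_stepAt (htr : IsTrace T s π) (n : ℕ) :
    Playable (stN s π n) (stepAt π n) := by
  by_cases h : n < π.length
  · have := (htr n h).2
    rw [stepAt_eq_get π h, stN_eq_applyTrace]
    exact this
  · intro p hp
    rw [stepAt_eq_none π (le_of_not_gt h)] at hp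
    rcases Set.mem_iUnion.1 hp with ⟨b, hb⟩
    rcases Set.mem_iUnion.1 hb with ⟨t, ht⟩
    rcases Set.mem_iUnion.1 ht with ⟨he, _⟩
    cases he

lemma wf_stepAt (htr : IsTrace T s π) (n : ℕ) : Step.Wf T (stepAt π n) := by
  by_cases h : n < π.length
  · rw [stepAt_eq_get π h]; exact (htr n h).1
  · intro a t ht
    rw [stepAt_eq_none π (le_of_not_gt h)] at ht
    cases ht

lemma orig_eq (htr : IsTrace T s π) {n : ℕ} {b : N.Auto} {t : N.Trans b}
    (h : stepAt π n b = some t) : stN s π n b = t.orig :=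
  playable_stepAt htr n _ (mem_pre_orig h)

lemma enab_eq (htr : IsTrace T s π) {n : ℕ} {b c : N.Auto} {t : N.Trans b}
    {k : N.LS c} (h : stepAt π n b = some t) (hc : t.enab c = some k) :
    stN s π n c = k :=
  playable_stepAt htr n _ (mem_pre_enab h hc)

lemma mem_T (htr : IsTrace T s π) {n : ℕ} {b : N.Auto} {t : N.Trans b}
    (h : stepAt π n b = some t) : t ∈ T b :=
  wf_stepAt htr n h

lemma stN_const {b : N.Auto} {v : ℕ} :
    ∀ {u : ℕ}, v ≤ u → (∀ m, v ≤ m → m < u → stepAt π m b = none) →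
      stN s π u b = stN s π v b := by
  intro u
  induction u with
  | zero => intro hv _; interval_cases v; rfl
  | succ u ih =>
    intro hv hq
    rcases Nat.lt_or_ge v (u+1) with h | h
    · have hu : v ≤ u := Nat.lt_succ_iff.1 h
      rw [stN_succ_none (hq u hu (Nat.lt_succ_self u))]
      exact ih hu (fun m hm hm' => hq m hm (Nat.lt_succ_of_lt hm'))
    · have : v = u + 1 := le_antisymm hv h
      subst this; rfl

end Traces

/-- Simple (acyclic) chained paths. -/
inductive SPath (a : N.Auto) : N.LS a → N.LS a → List (N.Trans a) → Prop
  | nil (x : N.LS a) : SPath a x x []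
  | cons (t : N.Trans a) {y : N.LS a} {l : List (N.Trans a)} :
      SPath a t.dest y l → (∀ u ∈ l, u.dest ≠ t.orig) → SPath a t.orig y (t :: l)

lemma SPath.nil_eq {a : N.Auto} {x y : N.LS a} (h : SPath a x y []) : x = y := by
  cases h; rfl

lemma SPath.head_orig {a : N.Auto} {x y : N.LS a} {t : N.Trans a}
    {l : List (N.Trans a)} (h : SPath a x y (t :: l)) : t.orig = x := by
  cases h; rfl

lemma SPath.dest_mem {a : N.Auto} {y : N.LS a} :
    ∀ {l : List (N.Trans a)} {x : N.LS a},
      SPath a x y l → l ≠ [] → ∃ u ∈ l, u.dest = y := by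
  intro l
  induction l with
  | nil => intro x _ hne; exact absurd rfl hne
  | cons t l' ih =>
    intro x h _
    cases h with
    | cons _ hp hd =>
      rcases eq_or_ne l' ([] : List (N.Trans a)) with h0 | h0
      · subst h0; exact ⟨t, List.mem_cons_self, hp.nil_eq⟩
      · rcases ih hp h0 with ⟨u, hu, hud⟩
        exact ⟨u, List.mem_cons_of_mem _ hu, hud⟩

lemma SPath.ne {a : N.Auto} {x y : N.LS a} {t : N.Trans a} {l : List (N.Trans a)}
    (h : SPath a x y (t :: l)) : x ≠ y := by
  cases h with
  | cons _ hp hd =>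
    rcases eq_or_ne l ([] : List (N.Trans a)) with h1 | h1
    · subst h1; have := hp.nil_eq; rw [← this]; exact fun hc => t.orig_ne_dest hc
    · rcases hp.dest_mem h1 with ⟨u, hu, hud⟩
      intro hc; exact hd u hu (hud.trans hc.symm)

lemma SPath.chain' {a : N.Auto} {y : N.LS a} :
    ∀ {l : List (N.Trans a)} {x : N.LS a},
      SPath a x y l → List.Chain' (fun u v => u.dest = v.orig) l := by
  intro l
  induction l with
  | nil => intro x _; exact List.isChain_nil
  | cons t l' ih =>
    intro x h
    cases h with
    | cons _ hp hd =>
      cases l' with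
      | nil => exact List.isChain_singleton t
      | cons u l'' => exact List.IsChain.cons_cons (hp.head_orig).symm (ih hp)

lemma SPath.pairwise {a : N.Auto} {y : N.LS a} :
    ∀ {l : List (N.Trans a)} {x : N.LS a},
      SPath a x y l → List.Pairwise (fun u v => v.dest ≠ u.orig) l := by
  intro l
  induction l with
  | nil => intro x _; exact List.Pairwise.nil
  | cons t l' ih =>
    intro x h
    cases h with
    | cons _ hp hd => exact List.Pairwise.cons (fun u hu => hd u hu) (ih hp)

lemma SPath.getLast_dest {a : N.Auto} {y : N.LS a} :
    ∀ {l : List (N.Trans a)} {x : N.LS a} (_ : SPath a x y l) (hne : l ≠ []),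
      (l.getLast hne).dest = y := by
  intro l
  induction l with
  | nil => intro x _ hne; exact absurd rfl hne
  | cons t l' ih =>
    intro x h hne
    cases h with
    | cons _ hp hd =>
      rcases eq_or_ne l' ([] : List (N.Trans a)) with h0 | h0
      · subst h0; simpa using hp.nil_eq
      · rw [List.getLast_cons h0]; exact ih hp h0

lemma SPath.isLocalPath {a : N.Auto} {x y : N.LS a} {l : List (N.Trans a)}
    (T : TransMap N) (hp : SPath a x y l) (hT : ∀ t ∈ l, t ∈ T a) :
    IsLocalPath T x y l := by
  refine ⟨hT, ?_⟩
  cases l with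
  | nil => exact Or.inl ⟨hp.nil_eq, rfl⟩
  | cons t l' =>
    refine Or.inr ⟨hp.ne, List.cons_ne_nil _ _, ?_, hp.getLast_dest _, ?_, ?_⟩
    · exact hp.head_orig
    · intro n h
      have := List.isChain_iff_getElem.1 hp.chain' n (by omega)
      simpa using this
    · intro n m hmn
      have := (List.pairwise_iff_get.1 hp.pairwise) m n hmn
      exact this


section Kept

variable (s : GState N) (π : List (Step N))

/-- `i` is an exit point from the state `stN s π v b` within `[v,u)`. -/
def IsExit (b : N.Auto) (v u i : ℕ) : Prop :=
  v ≤ i ∧ i < u ∧ stN s π i b = stN s π v b ∧ stN s π (i+1) b ≠ stN s π i b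

lemma exists_exit {b : N.Auto} {v : ℕ} :
    ∀ {u : ℕ}, v ≤ u → stN s π v b ≠ stN s π u b → ∃ i, IsExit s π b v u i := by
  intro u
  induction u with
  | zero => intro h hne; interval_cases v; exact absurd rfl hne
  | succ u ih =>
    intro hvu hne
    have hv : v ≤ u := by
      rcases Nat.lt_or_ge v (u+1) with h | h
      · exact Nat.lt_succ_iff.1 h
      · exact absurd (le_antisymm hvu h ▸ rfl) hne
    rcases eq_or_ne (stN s π u b) (stN s π v b) with he | he
    · exact ⟨u, hv, Nat.lt_succ_self u, he,
        fun hc => hne (by rw [hc, he])⟩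
    · rcases ih hv (fun hc => he hc.symm) with ⟨i, h1, h2, h3, h4⟩
      exact ⟨i, h1, Nat.lt_succ_of_lt h2, h3, h4⟩

/-- The greatest exit point from the state at time `v` within `[v,u)`. -/
noncomputable def exitStep (b : N.Auto) (v u : ℕ) : ℕ :=
  Nat.findGreatest (IsExit s π b v u) u

lemma exitStep_spec {b : N.Auto} {v u : ℕ} (hvu : v ≤ u)
    (hne : stN s π v b ≠ stN s π u b) : IsExit s π b v u (exitStep s π b v u) := by
  obtain ⟨i, hi⟩ := exists_exit s π hvu hne
  exact Nat.findGreatest_spec (le_of_lt hi.2.1) hi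

lemma exitStep_greatest {b : N.Auto} {v u j : ℕ} (hj : IsExit s π b v u j) :
    j ≤ exitStep s π b v u := by
  by_contra h
  exact Nat.findGreatest_is_greatest (lt_of_not_ge h) (le_of_lt hj.2.1) hj

lemma exit_no_revisit {b : N.Auto} {v u : ℕ} (hvu : v ≤ u)
    (hne : stN s π v b ≠ stN s π u b) :
    ∀ m, exitStep s π b v u < m → m ≤ u → stN s π m b ≠ stN s π v b := by
  intro m h1 h2 hc
  have hmu : m < u := by
    rcases lt_or_eq_of_le h2 with h | h
    · exact h
    · exact absurd (h ▸ hc) (fun hh => hne hh.symm)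
  obtain ⟨i, hi1, hi2, hi3, hi4⟩ :=
    exists_exit s π (le_of_lt hmu) (fun hh => hne (hc ▸ hh))
  have hsp := exitStep_spec s π hvu hne
  have hvex : v ≤ exitStep s π b v u := hsp.1
  have : IsExit s π b v u i := ⟨by omega, hi2, by rw [hi3, hc], hi4⟩
  have := exitStep_greatest s π this
  omega

/-- The loop-erased ("last exit") sub-chain of automaton `b` between times
`v` and `u`, as a list of (time, transition) pairs. -/
noncomputable def keptP (b : N.Auto) (v u : ℕ) : List (ℕ × N.Trans b) :=
  if h : u ≤ v ∨ stN s π v b = stN s π u b then [] else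
    have hvu : v ≤ u := le_of_lt (lt_of_not_ge (fun hc => h (Or.inl hc)))
    have hne : stN s π v b ≠ stN s π u b := fun hc => h (Or.inr hc)
    have hspec : IsExit s π b v u (exitStep s π b v u) := exitStep_spec s π hvu hne
    have hsome : ∃ t, stepAt π (exitStep s π b v u) b = some t := by
      rcases h' : stepAt π (exitStep s π b v u) b with _ | t
      · exact absurd (stN_succ_none h' (s := s)) hspec.2.2.2
      · exact ⟨t, rfl⟩
    (exitStep s π b v u, Classical.choose hsome) :: keptP b (exitStep s π b v u + 1) u
termination_by u - v
decreasing_by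
  have : v ≤ exitStep s π b v u := hspec.1
  have : exitStep s π b v u < u := hspec.2.1
  omega

lemma keptP_cons {s : GState N} {π : List (Step N)} {b : N.Auto} {v u : ℕ}
    (h1 : v < u) (h2 : stN s π v b ≠ stN s π u b) :
    ∃ (i : ℕ) (t : N.Trans b), IsExit s π b v u i ∧ stepAt π i b = some t ∧
      keptP s π b v u = (i, t) :: keptP s π b (i+1) u := by
  have hspec := exitStep_spec s π (le_of_lt h1) h2
  set i := exitStep s π b v u with hidef
  have hsome : ∃ t, stepAt π i b = some t := by
    rcases h' : stepAt π i b with _ | t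
    · exact absurd (stN_succ_none h' (s := s)) hspec.2.2.2
    · exact ⟨t, rfl⟩
  refine ⟨i, Classical.choose hsome, hspec, Classical.choose_spec hsome, ?_⟩
  rw [keptP]
  rw [dif_neg (by push_neg; exact ⟨h1, h2⟩)]

lemma keptP_nil_iff {b : N.Auto} {v u : ℕ} :
    keptP s π b v u = [] ↔ (u ≤ v ∨ stN s π v b = stN s π u b) := by
  rw [keptP]
  split
  · next h => simpa using h
  · next h => simpa using h

end Kept

section KeptSpec

variable {T : TransMap N} {s : GState N} {π : List (Step N)}

lemma keptP_spec (htr : IsTrace T s π) :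
    ∀ (d : ℕ) (b : N.Auto) (v u : ℕ), u - v ≤ d → v ≤ u →
    (∀ p ∈ keptP s π b v u, v ≤ p.1 ∧ p.1 < u ∧ stepAt π p.1 b = some p.2) ∧
    List.Pairwise (fun (p q : ℕ × N.Trans b) => p.1 < q.1) (keptP s π b v u) ∧
    SPath b (stN s π v b) (stN s π u b) ((keptP s π b v u).map Prod.snd) := by
  intro d
  induction d with
  | zero =>
    intro b v u hd hvu
    have hv : v = u := by omega
    subst hv
    have hnil : keptP s π b v v = [] := (keptP_nil_iff s π).2 (Or.inl le_rfl)
    rw [hnil]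
    exact ⟨by simp, List.Pairwise.nil, by exact SPath.nil _⟩
  | succ d ih =>
    intro b v u hd hvu
    by_cases h : u ≤ v ∨ stN s π v b = stN s π u b
    · have hnil : keptP s π b v u = [] := (keptP_nil_iff s π).2 h
      rw [hnil]
      have heq : stN s π v b = stN s π u b := by
        rcases h with h | h
        · rw [le_antisymm h hvu]
        · exact h
      refine ⟨by simp, List.Pairwise.nil, ?_⟩
      rw [← heq]
      exact SPath.nil _
    · push_neg at h
      obtain ⟨h1, h2⟩ := h
      have hvu' : v < u := h1
      have hspec := exitStep_spec s π (le_of_lt hvu') h2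
      set i := exitStep s π b v u with hidef
      have hsome : ∃ t, stepAt π i b = some t := by
        rcases h' : stepAt π i b with _ | t
        · exact absurd (stN_succ_none h' (s := s)) hspec.2.2.2
        · exact ⟨t, rfl⟩
      have heq : keptP s π b v u
          = (i, Classical.choose hsome) :: keptP s π b (i + 1) u := by
        rw [keptP]
        rw [dif_neg (by push_neg; exact ⟨h1, h2⟩)]
      set t := Classical.choose hsome with htdef
      have ht : stepAt π i b = some t := Classical.choose_spec hsome
      have hvi : v ≤ i := hspec.1
      have hiu : i < u := hspec.2.1
      obtain ⟨ihmem, ihpw, ihsp⟩ := ih b (i+1) u (by omega) (by omega)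
      have horig : t.orig = stN s π v b := by
        rw [← orig_eq htr ht, hspec.2.2.1]
      have hdest : stN s π (i+1) b = t.dest := stN_succ_some ht
      rw [heq]
      refine ⟨?_, ?_, ?_⟩
      · intro p hp
        rcases List.mem_cons.1 hp with hp | hp
        · subst hp; exact ⟨hvi, hiu, ht⟩
        · obtain ⟨hp1, hp2, hp3⟩ := ihmem p hp
          exact ⟨by omega, hp2, hp3⟩
      · refine List.Pairwise.cons ?_ ihpw
        intro q hq
        have := (ihmem q hq).1
        omega
      · show SPath b (stN s π v b) (stN s π u b)
          (t :: (keptP s π b (i+1) u).map Prod.snd)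
        rw [← horig]
        refine SPath.cons t ?_ ?_
        · rw [hdest] at ihsp
          exact ihsp
        · intro x hx
          rcases List.mem_map.1 hx with ⟨p, hp, hpx⟩
          obtain ⟨hp1, hp2, hp3⟩ := ihmem p hp
          have hxdest : x.dest = stN s π (p.1 + 1) b := by
            rw [← hpx]; exact (stN_succ_some hp3).symm
          rw [hxdest, horig]
          exact exit_no_revisit s π (le_of_lt hvu') h2 (p.1+1) (by omega) (by omega)

/-- Convenient packaging. -/
lemma keptP_mem (htr : IsTrace T s π) {b : N.Auto} {v u : ℕ} (hvu : v ≤ u)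
    {p : ℕ × N.Trans b} (hp : p ∈ keptP s π b v u) :
    v ≤ p.1 ∧ p.1 < u ∧ stepAt π p.1 b = some p.2 :=
  (keptP_spec htr (u - v) b v u le_rfl hvu).1 p hp

lemma keptP_spath (htr : IsTrace T s π) {b : N.Auto} {v u : ℕ} (hvu : v ≤ u) :
    SPath b (stN s π v b) (stN s π u b) ((keptP s π b v u).map Prod.snd) :=
  (keptP_spec htr (u - v) b v u le_rfl hvu).2.2

lemma keptP_pairwise (htr : IsTrace T s π) {b : N.Auto} {v u : ℕ} (hvu : v ≤ u) :
    List.Pairwise (fun (p q : ℕ × N.Trans b) => p.1 < q.1) (keptP s π b v u) :=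
  (keptP_spec htr (u - v) b v u le_rfl hvu).2.1

end KeptSpec

section Validity

variable {T : TransMap N} {s : GState N} {π : List (Step N)} {Ω : Set (Obj N)}

lemma keptP_isLocalPath (htr : IsTrace T s π) {b : N.Auto} {v u : ℕ} (hvu : v ≤ u) :
    IsLocalPath T (stN s π v b) (stN s π u b) ((keptP s π b v u).map Prod.snd) := by
  refine (keptP_spath htr hvu).isLocalPath T ?_
  intro t ht
  rcases List.mem_map.1 ht with ⟨p, hp, hpt⟩
  obtain ⟨_, _, h3⟩ := keptP_mem htr hvu hp
  rw [← hpt]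
  exact mem_T htr h3

/-- Part A: all objectives from the initial state to reached states are valid. -/
lemma partA (htr : IsTrace T s π) (hΩ : Fop T s Ω = Ω) :
    ∀ (n : ℕ) (c : N.Auto), (⟨c, (s c, stN s π n c)⟩ : Obj N) ∈ Ω := by
  intro n
  induction n using Nat.strong_induction_on with
  | _ n ih =>
    intro c
    rw [← hΩ]
    refine ⟨(keptP s π c 0 n).map Prod.snd, ?_, ?_⟩
    · exact keptP_isLocalPath htr (Nat.zero_le n)
    · intro t ht b k hbk
      rcases List.mem_map.1 ht with ⟨p, hp, hpt⟩
      obtain ⟨_, h2, h3⟩ := keptP_mem htr (Nat.zero_le n) hp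
      have : stN s π p.1 b = k := enab_eq htr h3 (hpt ▸ hbk)
      rw [← this]
      exact ih p.1 h2 b

lemma keptP_rcsol (htr : IsTrace T s π) (hΩ : Fop T s Ω = Ω) {b : N.Auto}
    {v u : ℕ} (hvu : v ≤ u) :
    (keptP s π b v u).map Prod.snd
      ∈ rcsol T s Ω (⟨b, (stN s π v b, stN s π u b)⟩ : Obj N) := by
  refine ⟨keptP_isLocalPath htr hvu, ?_⟩
  intro t ht c k hck
  rcases List.mem_map.1 ht with ⟨p, hp, hpt⟩
  obtain ⟨_, _, h3⟩ := keptP_mem htr hvu hp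
  have : stN s π p.1 c = k := enab_eq htr h3 (hpt ▸ hck)
  rw [← this]
  exact partA htr hΩ p.1 c

/-- Membership in `tr(B)` via a kept segment. -/
lemma keptP_mem_trB (htr : IsTrace T s π) (hΩ : Fop T s Ω = Ω) {B : Set (Obj N)}
    {b : N.Auto} {v u : ℕ} (hvu : v ≤ u)
    (hB : (⟨b, (stN s π v b, stN s π u b)⟩ : Obj N) ∈ B)
    {p : ℕ × N.Trans b} (hp : p ∈ keptP s π b v u) :
    (⟨b, p.2⟩ : Σ a : N.Auto, N.Trans a) ∈ trB T s Ω B := by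
  exact ⟨stN s π v b, stN s π u b, hB,
    (keptP s π b v u).map Prod.snd, keptP_rcsol htr hΩ hvu,
    List.mem_map.2 ⟨p, hp, rfl⟩⟩

end Validity

section Demands

variable (s : GState N) (π : List (Step N))

/-- Demand times of automaton `b` in the demand set `Df`. -/
noncomputable def timesOf (Df : Finset (N.Auto × ℕ)) (b : N.Auto) : Finset ℕ :=
  (Df.filter (fun p => p.1 = b)).image Prod.snd

lemma mem_timesOf {Df : Finset (N.Auto × ℕ)} {b : N.Auto} {n : ℕ} :
    n ∈ timesOf Df b ↔ (b, n) ∈ Df := by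
  constructor
  · intro h
    rcases Finset.mem_image.1 h with ⟨p, hp, hpn⟩
    rcases Finset.mem_filter.1 hp with ⟨hp1, hp2⟩
    have : p = (b, n) := Prod.ext hp2 hpn
    exact this ▸ hp1
  · intro h
    exact Finset.mem_image.2 ⟨(b, n), Finset.mem_filter.2 ⟨h, rfl⟩, rfl⟩

/-- The previous demand-boundary at or before `i` (or `0`). -/
noncomputable def prevT (Df : Finset (N.Auto × ℕ)) (b : N.Auto) (i : ℕ) : ℕ :=
  (insert 0 ((timesOf Df b).filter (fun u => u ≤ i))).max'
    (Finset.insert_nonempty _ _)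

lemma prevT_le (Df : Finset (N.Auto × ℕ)) (b : N.Auto) (i : ℕ) :
    prevT Df b i ≤ i := by
  have := (insert 0 ((timesOf Df b).filter (fun u => u ≤ i))).max'_mem
    (Finset.insert_nonempty _ _)
  rcases Finset.mem_insert.1 this with h | h
  · rw [prevT, h]; exact Nat.zero_le i
  · exact (Finset.mem_filter.1 h).2

lemma prevT_mem (Df : Finset (N.Auto × ℕ)) (b : N.Auto) (i : ℕ) :
    prevT Df b i = 0 ∨ prevT Df b i ∈ timesOf Df b := by
  have := (insert 0 ((timesOf Df b).filter (fun u => u ≤ i))).max'_mem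
    (Finset.insert_nonempty _ _)
  rcases Finset.mem_insert.1 this with h | h
  · exact Or.inl h
  · exact Or.inr (Finset.mem_filter.1 h).1

lemma le_prevT {Df : Finset (N.Auto × ℕ)} {b : N.Auto} {i w : ℕ}
    (hw : w ∈ timesOf Df b) (hwi : w ≤ i) : w ≤ prevT Df b i := by
  apply Finset.le_max'
  exact Finset.mem_insert_of_mem (Finset.mem_filter.2 ⟨hw, hwi⟩)

/-- Kept occurrences w.r.t. a demand set: `(i,t)` belongs to the loop-erased
serving segment of its surrounding demand interval. -/
def KeptOcc (Df : Finset (N.Auto × ℕ)) (b : N.Auto) (i : ℕ) (t : N.Trans b) : Prop :=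
  ∃ u ∈ timesOf Df b, i < u ∧ (∀ w ∈ timesOf Df b, i < w → u ≤ w) ∧
    (i, t) ∈ keptP s π b (prevT Df b i) u

/-- One restricted step. -/
noncomputable def oStep (Df : Finset (N.Auto × ℕ)) (i : ℕ) : Step N :=
  fun b => (stepAt π i b).bind
    (fun t => if KeptOcc s π Df b i t then some t else none)

/-- The restriction of `π` to the kept occurrences. -/
noncomputable def omg (Df : Finset (N.Auto × ℕ)) : List (Step N) :=
  (List.range π.length).map (fun i => oStep s π Df i)

lemma omg_length (Df : Finset (N.Auto × ℕ)) : (omg s π Df).length = π.length := by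
  simp [omg]

lemma stepAt_omg (Df : Finset (N.Auto × ℕ)) (i : ℕ) :
    stepAt (omg s π Df) i = oStep s π Df i := by
  by_cases h : i < π.length
  · have h' : i < (omg s π Df).length := by rw [omg_length]; exact h
    rw [stepAt_eq_get _ h']
    simp [omg, List.get_eq_getElem]
  · push_neg at h
    have h' : (omg s π Df).length ≤ i := by rw [omg_length]; exact h
    rw [stepAt_eq_none _ h']
    funext b
    simp [oStep, stepAt_eq_none π h]

lemma oStep_some_iff {Df : Finset (N.Auto × ℕ)} {i : ℕ} {b : N.Auto}
    {t : N.Trans b} :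
    oStep s π Df i b = some t ↔ stepAt π i b = some t ∧ KeptOcc s π Df b i t := by
  simp only [oStep]
  rcases h : stepAt π i b with _ | t'
  · simp [h]
  · rw [Option.bind_some]
    split_ifs with hk
    · constructor
      · intro he; obtain rfl := Option.some.inj he; exact ⟨rfl, hk⟩
      · intro ⟨he, _⟩; obtain rfl := Option.some.inj he; rfl
    · constructor
      · intro he; exact absurd he (by simp)
      · intro ⟨he, hke⟩; obtain rfl := Option.some.inj he; exact absurd hke hk

lemma oStep_sub {Df : Finset (N.Auto × ℕ)} {i : ℕ} {b : N.Auto} {t : N.Trans b}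
    (h : oStep s π Df i b = some t) : stepAt π i b = some t :=
  ((oStep_some_iff s π).1 h).1

end Demands

section Walk

variable {T : TransMap N} {s : GState N} {π : List (Step N)}
variable {Df : Finset (N.Auto × ℕ)}

lemma omg_const {b : N.Auto} {v u : ℕ} (hvu : v ≤ u)
    (h : ∀ m, v ≤ m → m < u → oStep s π Df m b = none) :
    stN s (omg s π Df) u b = stN s (omg s π Df) v b :=
  stN_const hvu (fun m hm hm' => by rw [stepAt_omg]; exact h m hm hm')

lemma walk_interval (htr : IsTrace T s π) :
    ∀ (d : ℕ) (b : N.Auto) (v u : ℕ), u - v ≤ d → v ≤ u →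
    stN s (omg s π Df) v b = stN s π v b →
    (∀ i t, v ≤ i → i < u →
      (oStep s π Df i b = some t ↔ (i, t) ∈ keptP s π b v u)) →
    (∀ p ∈ keptP s π b v u, stN s (omg s π Df) p.1 b = p.2.orig) ∧
    stN s (omg s π Df) u b = stN s π u b := by
  intro d
  induction d with
  | zero =>
    intro b v u hd hvu h0 hiff
    have hv : v = u := by omega
    subst hv
    have hnil : keptP s π b v v = [] := (keptP_nil_iff s π).2 (Or.inl le_rfl)
    exact ⟨by rw [hnil]; simp, h0⟩
  | succ d ih =>
    intro b v u hd hvu h0 hiff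
    by_cases h : u ≤ v ∨ stN s π v b = stN s π u b
    · have hnil : keptP s π b v u = [] := (keptP_nil_iff s π).2 h
      have hconst : stN s (omg s π Df) u b = stN s (omg s π Df) v b := by
        refine omg_const hvu (fun m hm hm' => ?_)
        rcases hh : oStep s π Df m b with _ | t
        · rfl
        · have := (hiff m t hm hm').1 hh
          rw [hnil] at this
          exact absurd this List.not_mem_nil
      refine ⟨by rw [hnil]; simp, ?_⟩
      rw [hconst, h0]
      rcases h with h | h
      · rw [le_antisymm h hvu]
      · exact h
    · push_neg at h
      obtain ⟨h1, h2⟩ := h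
      obtain ⟨i, t, hspec, ht, heq⟩ := keptP_cons h1 h2
      have hvi : v ≤ i := hspec.1
      have hiu : i < u := hspec.2.1
      have horig : t.orig = stN s π v b := by
        rw [← orig_eq htr ht, hspec.2.2.1]
      have hnokept : ∀ m, v ≤ m → m < i → oStep s π Df m b = none := by
        intro m hm hm'
        rcases hh : oStep s π Df m b with _ | t'
        · rfl
        · have := (hiff m t' hm (by omega)).1 hh
          rw [heq] at this
          rcases List.mem_cons.1 this with hc | hc
          · have : m = i := congrArg Prod.fst hc
            omega
          · have := (keptP_mem htr (by omega) hc).1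
            omega
      have hconst : stN s (omg s π Df) i b = stN s (omg s π Df) v b :=
        omg_const hvi hnokept
      have hsti : stN s (omg s π Df) i b = t.orig := by
        rw [hconst, h0, horig]
      have hkepti : oStep s π Df i b = some t :=
        (hiff i t hvi hiu).2 (by rw [heq]; exact List.mem_cons_self)
      have hsti1 : stN s (omg s π Df) (i+1) b = t.dest := by
        have : stepAt (omg s π Df) i b = some t := by
          rw [stepAt_omg]; exact hkepti
        exact stN_succ_some this
      have hπi1 : stN s π (i+1) b = t.dest := stN_succ_some ht
      have hiff' : ∀ i' t', i+1 ≤ i' → i' < u →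
          (oStep s π Df i' b = some t' ↔ (i', t') ∈ keptP s π b (i+1) u) := by
        intro i' t' hi1 hi2
        rw [hiff i' t' (by omega) hi2, heq]
        constructor
        · intro hm
          rcases List.mem_cons.1 hm with hc | hc
          · have : i' = i := congrArg Prod.fst hc
            omega
          · exact hc
        · exact List.mem_cons_of_mem _
      obtain ⟨ihA, ihB⟩ := ih b (i+1) u (by omega) (by omega)
        (by rw [hsti1, hπi1]) hiff'
      refine ⟨?_, ihB⟩
      rw [heq]
      intro p hp
      rcases List.mem_cons.1 hp with hc | hc
      · rw [hc]; exact hsti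
      · exact ihA p hc

lemma kept_iff_interval (htr : IsTrace T s π) {b : N.Auto} {v u : ℕ}
    (hv0 : v = 0 ∨ v ∈ timesOf Df b) (hu : u ∈ timesOf Df b) (hvu : v < u)
    (hno : ∀ w ∈ timesOf Df b, ¬(v < w ∧ w < u)) :
    ∀ i t, v ≤ i → i < u →
      (oStep s π Df i b = some t ↔ (i, t) ∈ keptP s π b v u) := by
  intro i t hvi hiu
  have hprev : prevT Df b i = v := by
    apply le_antisymm
    · apply Finset.max'_le
      intro w hw
      rcases Finset.mem_insert.1 hw with hw0 | hw'
      · omega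
      · obtain ⟨hwt, hwle⟩ := Finset.mem_filter.1 hw'
        by_contra hc
        exact hno w hwt ⟨by omega, by omega⟩
    · rcases hv0 with h | h
      · omega
      · exact le_prevT h hvi
  constructor
  · intro ho
    obtain ⟨hπ, hko⟩ := (oStep_some_iff s π).1 ho
    obtain ⟨u', hu'1, hu'2, hu'3, hu'4⟩ := hko
    have huu : u' = u := by
      refine le_antisymm (hu'3 u hu hiu) ?_
      by_contra hc
      exact hno u' hu'1 ⟨by omega, by omega⟩
    rw [hprev, huu] at hu'4
    exact hu'4
  · intro hk
    obtain ⟨hk1, hk2, hk3⟩ := keptP_mem htr (le_of_lt hvu) hk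
    refine (oStep_some_iff s π).2 ⟨hk3, u, hu, hiu, ?_, ?_⟩
    · intro w hwt hiw
      by_contra hc
      exact hno w hwt ⟨by omega, by omega⟩
    · rw [hprev]
      exact hk

lemma walk_at_time (htr : IsTrace T s π) :
    ∀ (u : ℕ) (b : N.Auto), (u = 0 ∨ u ∈ timesOf Df b) →
      stN s (omg s π Df) u b = stN s π u b := by
  intro u
  induction u using Nat.strong_induction_on with
  | _ u ihu =>
    intro b hu
    rcases Nat.eq_zero_or_pos u with h0 | hpos
    · subst h0; rfl
    rcases hu with h0 | hu
    · omega
    set v := prevT Df b (u-1) with hvdef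
    have hvle : v ≤ u - 1 := prevT_le Df b (u-1)
    have hvu : v < u := by omega
    have hv0 : v = 0 ∨ v ∈ timesOf Df b := prevT_mem Df b (u-1)
    have h0 : stN s (omg s π Df) v b = stN s π v b := ihu v hvu b hv0
    have hno : ∀ w ∈ timesOf Df b, ¬(v < w ∧ w < u) := by
      intro w hw ⟨hw1, hw2⟩
      have := le_prevT hw (show w ≤ u - 1 by omega)
      omega
    exact (walk_interval htr (u-v) b v u le_rfl (le_of_lt hvu) h0
      (kept_iff_interval htr hv0 hu hvu hno)).2

lemma walk_kept (htr : IsTrace T s π) {b : N.Auto} {i : ℕ} {t : N.Trans b}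
    (hko : KeptOcc s π Df b i t) :
    stN s (omg s π Df) i b = t.orig := by
  obtain ⟨u, hu1, hu2, hu3, hu4⟩ := hko
  set v := prevT Df b i with hvdef
  have hvi : v ≤ i := prevT_le Df b i
  have hvu : v < u := by omega
  have hv0 : v = 0 ∨ v ∈ timesOf Df b := prevT_mem Df b i
  have h0 : stN s (omg s π Df) v b = stN s π v b := walk_at_time htr v b hv0
  have hno : ∀ w ∈ timesOf Df b, ¬(v < w ∧ w < u) := by
    intro w hw ⟨hw1, hw2⟩
    rcases le_or_gt w i with hwi | hwi
    · have := le_prevT hw hwi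
      omega
    · have := hu3 w hw hwi
      omega
  exact (walk_interval htr (u-v) b v u le_rfl (le_of_lt hvu) h0
    (kept_iff_interval htr hv0 hu1 hvu hno)).1 (i, t) hu4

end Walk

section Post

lemma mem_post_dest {τ : Step N} {b : N.Auto} {t : N.Trans b}
    (h : τ b = some t) : (⟨b, t.dest⟩ : LSt N) ∈ τ.post := by
  constructor
  · refine Set.mem_iUnion.2 ⟨b, Set.mem_iUnion.2 ⟨t, Set.mem_iUnion.2 ⟨h, ?_⟩⟩⟩
    exact Set.mem_insert _ _
  · intro hc
    obtain ⟨t', ht', he⟩ := hc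
    rw [h] at ht'
    obtain rfl := Option.some.inj ht'
    exact t.orig_ne_dest he.symm

lemma mem_post_enab {τ : Step N} {b c : N.Auto} {t : N.Trans b} {k : N.LS c}
    (h : τ b = some t) (hk : t.enab c = some k) (hnoc : τ c = none) :
    (⟨c, k⟩ : LSt N) ∈ τ.post := by
  constructor
  · refine Set.mem_iUnion.2 ⟨b, Set.mem_iUnion.2 ⟨t, Set.mem_iUnion.2 ⟨h, ?_⟩⟩⟩
    exact Set.mem_insert_of_mem _ hk
  · intro hc
    obtain ⟨t', ht', _⟩ := hc
    rw [hnoc] at ht'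
    cases ht'

lemma post_cases {τ : Step N} {c : N.Auto} {x : N.LS c}
    (h : (⟨c, x⟩ : LSt N) ∈ τ.post) :
    (∃ t : N.Trans c, τ c = some t ∧ t.dest = x) ∨
    (∃ (b : N.Auto) (t : N.Trans b), τ b = some t ∧ t.enab c = some x) := by
  obtain ⟨hmem, _⟩ := h
  rcases Set.mem_iUnion.1 hmem with ⟨b, hb⟩
  rcases Set.mem_iUnion.1 hb with ⟨t, ht⟩
  rcases Set.mem_iUnion.1 ht with ⟨hbt, hps⟩
  rcases Set.mem_insert_iff.1 hps with he | he
  · obtain ⟨rfl, hx⟩ := Sigma.mk.inj_iff.1 he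
    exact Or.inl ⟨t, hbt, (eq_of_heq hx).symm⟩
  · exact Or.inr ⟨b, t, hbt, he⟩

end Post

section GoalWitness

variable {T : TransMap N} {s : GState N} {π : List (Step N)} {g : N.Auto}
  {gtop : N.LS g} {nw : ℕ}

/-- Packaged facts about the goal witness step. -/
structure GW (T : TransMap N) (s : GState N) (π : List (Step N))
    (g : N.Auto) (gtop : N.LS g) (nw : ℕ) : Prop where
  hnw : nw < π.length
  hpost : (⟨g, gtop⟩ : LSt N) ∈ (stepAt π nw).post
  hafter : ∀ m, nw < m → ∀ x : N.LS g, (⟨g, x⟩ : LSt N) ∉ (stepAt π m).post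

lemma GW.of_tracePost (htp : (⟨g, gtop⟩ : LSt N) ∈ tracePost π) :
    ∃ nw, GW T s π g gtop nw := by
  obtain ⟨n, hn, hpost, hafter⟩ := htp
  refine ⟨n, hn, by rw [stepAt_eq_get π hn]; exact hpost, ?_⟩
  intro m hm x
  by_cases hmL : m < π.length
  · rw [stepAt_eq_get π hmL]
    exact hafter m hmL hm x
  · rw [stepAt_eq_none π (le_of_not_gt hmL)]
    intro hc
    obtain ⟨hmem, _⟩ := hc
    rcases Set.mem_iUnion.1 hmem with ⟨b, hb⟩
    rcases Set.mem_iUnion.1 hb with ⟨t, ht⟩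
    rcases Set.mem_iUnion.1 ht with ⟨hbt, _⟩
    cases hbt

lemma GW.no_g_trans (hgw : GW T s π g gtop nw) {m : ℕ} (hm : nw < m) :
    stepAt π m g = none := by
  rcases h : stepAt π m g with _ | t
  · rfl
  · exact absurd (mem_post_dest h) (hgw.hafter m hm t.dest)

lemma GW.no_g_cond (hgw : GW T s π g gtop nw) {m : ℕ} (hm : nw < m)
    {c : N.Auto} {t : N.Trans c} (h : stepAt π m c = some t) :
    t.enab g = none := by
  rcases hk : t.enab g with _ | k
  · rfl
  · exact absurd (mem_post_enab h hk (hgw.no_g_trans hm))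
      (hgw.hafter m hm k)

lemma GW.st_succ_eq_gtop (htr : IsTrace T s π) (hgw : GW T s π g gtop nw) :
    stN s π (nw+1) g = gtop := by
  rcases post_cases hgw.hpost with ⟨t, ht, hdest⟩ | ⟨b, t, hbt, henab⟩
  · rw [stN_succ_some ht, hdest]
  · have hst : stN s π nw g = gtop := enab_eq htr hbt henab
    rcases hg : stepAt π nw g with _ | t'
    · rw [stN_succ_none hg, hst]
    · exfalso
      obtain ⟨_, hnot⟩ := hgw.hpost
      exact hnot ⟨t', hg, by rw [← orig_eq htr hg, hst]⟩

lemma GW.st_eq_gtop (htr : IsTrace T s π) (hgw : GW T s π g gtop nw)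
    {m : ℕ} (hm : nw + 1 ≤ m) : stN s π m g = gtop := by
  rw [← hgw.st_succ_eq_gtop htr]
  exact stN_const hm (fun m' hm' _ => hgw.no_g_trans (by omega))

end GoalWitness

section Iteration

variable (s : GState N) (π : List (Step N))

/-- Condition demands generated by kept occurrences. -/
noncomputable def condSet (Df : Finset (N.Auto × ℕ)) : Finset (N.Auto × ℕ) :=
  (Finset.univ ×ˢ Finset.range π.length).filter
    (fun p => ∃ (b : N.Auto) (t : N.Trans b),
      KeptOcc s π Df b p.2 t ∧ t.enab p.1 ≠ none)

lemma mem_condSet {Df : Finset (N.Auto × ℕ)} {p : N.Auto × ℕ} :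
    p ∈ condSet s π Df ↔ p.2 < π.length ∧
      ∃ (b : N.Auto) (t : N.Trans b),
        KeptOcc s π Df b p.2 t ∧ t.enab p.1 ≠ none := by
  rw [condSet, Finset.mem_filter, Finset.mem_product]
  simp [Finset.mem_range]

variable (g : N.Auto) (nw : ℕ)

/-- The demand-set iteration. -/
noncomputable def Dit : ℕ → Finset (N.Auto × ℕ)
  | 0 => {(g, nw+1)}
  | (α+1) => Dit α ∪ condSet s π (Dit α)

lemma Dit_mono {α β : ℕ} (h : α ≤ β) : Dit s π g nw α ⊆ Dit s π g nw β := by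
  induction β with
  | zero => rw [Nat.le_zero.1 h]
  | succ β ih =>
    rcases Nat.lt_or_ge α (β+1) with h' | h'
    · exact (ih (by omega)).trans (Finset.subset_union_left)
    · rw [le_antisymm h h']

lemma goal_mem_Dit (α : ℕ) : (g, nw+1) ∈ Dit s π g nw α :=
  Dit_mono s π g nw (Nat.zero_le α) (Finset.mem_singleton_self _)

lemma Dit_subset_big (hnw : nw < π.length) (α : ℕ) :
    Dit s π g nw α ⊆ Finset.univ ×ˢ Finset.range (π.length + 1) := by
  induction α with
  | zero =>
    intro p hp
    simp only [Dit, Finset.mem_singleton] at hp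
    subst hp
    exact Finset.mem_product.2 ⟨Finset.mem_univ _, Finset.mem_range.2 (by omega)⟩
  | succ α ih =>
    intro p hp
    rcases Finset.mem_union.1 hp with hp | hp
    · exact ih hp
    · have := (mem_condSet s π).1 hp
      exact Finset.mem_product.2 ⟨Finset.mem_univ _, Finset.mem_range.2 (by omega)⟩

lemma exists_stable (hnw : nw < π.length) :
    ∃ NN, Dit s π g nw (NN+1) = Dit s π g nw NN := by
  by_contra h
  push_neg at h
  have grow : ∀ α, α ≤ (Dit s π g nw α).card := by
    intro α
    induction α with
    | zero => exact Nat.zero_le _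
    | succ α ih =>
      have hss : Dit s π g nw α ⊂ Dit s π g nw (α+1) :=
        (Finset.ssubset_iff_of_subset (Dit_mono s π g nw (Nat.le_succ α))).2
          (by
            rcases Finset.exists_of_ssubset
              (lt_of_le_of_ne (Dit_mono s π g nw (Nat.le_succ α)) (fun hc => h α hc.symm)) with ⟨x, hx1, hx2⟩
            exact ⟨x, hx1, hx2⟩)
      have := Finset.card_lt_card hss
      omega
  set M := (Finset.univ ×ˢ Finset.range (π.length + 1) : Finset (N.Auto × ℕ)).card
  have h1 := grow (M+1)
  have h2 : (Dit s π g nw (M+1)).card ≤ M :=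
    Finset.card_le_card (Dit_subset_big s π g nw hnw (M+1))
  omega

end Iteration

section StableTrace

variable {T : TransMap N} {s : GState N} {π : List (Step N)}

/-- A stable demand set. -/
structure Stable (s : GState N) (π : List (Step N)) (Df : Finset (N.Auto × ℕ)) : Prop where
  hstab : ∀ {b : N.Auto} {i : ℕ} {t : N.Trans b}, KeptOcc s π Df b i t →
    ∀ {c : N.Auto} {k : N.LS c}, t.enab c = some k → (c, i) ∈ Df

lemma stable_of_fix {g : N.Auto} {nw : ℕ} {NN : ℕ}
    (htr : IsTrace T s π)
    (hfix : Dit s π g nw (NN+1) = Dit s π g nw NN) :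
    Stable s π (Dit s π g nw NN) := by
  constructor
  intro b i t hko c k hk
  obtain ⟨u, hu1, hu2, hu3, hu4⟩ := hko
  have hvu : prevT (Dit s π g nw NN) b i ≤ u := le_trans (prevT_le _ _ _) (le_of_lt hu2)
  obtain ⟨_, _, hsome⟩ := keptP_mem htr hvu hu4
  have hiL : i < π.length := stepAt_some_lt hsome
  have : (c, i) ∈ condSet s π (Dit s π g nw NN) :=
    (mem_condSet s π).2 ⟨hiL, b, t, ⟨u, hu1, hu2, hu3, hu4⟩, by rw [hk]; simp⟩
  have : (c, i) ∈ Dit s π g nw (NN+1) := Finset.mem_union_right _ this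
  rw [hfix] at this
  exact this

/-- The restriction to kept occurrences is a trace. -/
lemma omg_isTrace {Df : Finset (N.Auto × ℕ)} (htr : IsTrace T s π)
    (hst : Stable s π Df) : IsTrace T s (omg s π Df) := by
  intro i hi
  have hiL : i < π.length := by rw [omg_length] at hi; exact hi
  have hget : (omg s π Df).get ⟨i, hi⟩ = oStep s π Df i := by
    rw [← stepAt_eq_get _ hi, stepAt_omg]
  constructor
  · intro b t ht
    rw [hget] at ht
    exact mem_T htr (oStep_sub s π ht)
  · intro p hp
    rw [hget] at hp
    rw [← stN_eq_applyTrace]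
    rcases Set.mem_iUnion.1 hp with ⟨b, hb⟩
    rcases Set.mem_iUnion.1 hb with ⟨t, ht⟩
    rcases Set.mem_iUnion.1 ht with ⟨hbt, hps⟩
    obtain ⟨hπt, hko⟩ := (oStep_some_iff s π).1 hbt
    rcases Set.mem_insert_iff.1 hps with he | he
    · subst he
      exact walk_kept htr hko
    · -- p is an enabling condition of t
      have hcd : (p.1, i) ∈ Df := hst.hstab hko he
      have h1 : stN s (omg s π Df) i p.1 = stN s π i p.1 :=
        walk_at_time htr i p.1 (Or.inr (mem_timesOf.2 hcd))
      rw [h1]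
      exact enab_eq htr hπt he

end StableTrace

section OmgGoal

variable {T : TransMap N} {s : GState N} {π : List (Step N)}
  {Df : Finset (N.Auto × ℕ)} {g : N.Auto} {gtop : N.LS g} {nw : ℕ}

lemma exists_step_of_ne {s' : GState N} {π' : List (Step N)} {b : N.Auto}
    {v u : ℕ} (hvu : v ≤ u) (hne : stN s' π' v b ≠ stN s' π' u b) :
    ∃ m, v ≤ m ∧ m < u ∧ stepAt π' m b ≠ none := by
  by_contra h
  push_neg at h
  exact hne (stN_const hvu (fun m hm hm' => h m hm hm')).symm

/-- `g`-activity of a step of the restricted trace. -/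
def GActive (s : GState N) (π : List (Step N)) (Df : Finset (N.Auto × ℕ))
    (g : N.Auto) (m : ℕ) : Prop :=
  oStep s π Df m g ≠ none ∨
    ∃ (c : N.Auto) (t : N.Trans c), oStep s π Df m c = some t ∧ t.enab g ≠ none

lemma omg_goal_tracePost (htr : IsTrace T s π) (hst : Stable s π Df)
    (hgw : GW T s π g gtop nw) (hgm : (g, nw+1) ∈ Df) (hsg : s g ≠ gtop) :
    (⟨g, gtop⟩ : LSt N) ∈ tracePost (omg s π Df) := by
  have hL : nw + 1 ≤ π.length := hgw.hnw
  have hwalk_top : stN s (omg s π Df) (nw+1) g = gtop := by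
    rw [walk_at_time htr (nw+1) g (Or.inr (mem_timesOf.2 hgm))]
    exact hgw.st_succ_eq_gtop htr
  -- there is a kept g-transition
  obtain ⟨m0, _, hm0u, hm0⟩ := exists_step_of_ne (s' := s) (π' := omg s π Df)
    (Nat.zero_le (nw+1)) (show stN s (omg s π Df) 0 g ≠ stN s (omg s π Df) (nw+1) g by
      rw [hwalk_top]; exact hsg)
  have hm0L : m0 < π.length := by omega
  have hm0act : GActive s π Df g m0 := Or.inl (by rw [← stepAt_omg]; exact hm0)
  set A : Finset ℕ := (Finset.range π.length).filter (GActive s π Df g) with hA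
  have hAne : A.Nonempty := ⟨m0, Finset.mem_filter.2 ⟨Finset.mem_range.2 hm0L, hm0act⟩⟩
  set m' := A.max' hAne with hm'
  have hm'L : m' < π.length :=
    Finset.mem_range.1 (Finset.mem_filter.1 (A.max'_mem hAne)).1
  have hm'act : GActive s π Df g m' := (Finset.mem_filter.1 (A.max'_mem hAne)).2
  have hmax : ∀ m, m' < m → ¬ GActive s π Df g m := by
    intro m hm hact
    have hmL : m < π.length := by
      rcases hact with h | ⟨c, t, h, _⟩
      · rcases ho : oStep s π Df m g with _ | t
        · exact absurd ho h
        · exact stepAt_some_lt (oStep_sub s π ho)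
      · exact stepAt_some_lt (oStep_sub s π h)
    have : m ∈ A := Finset.mem_filter.2 ⟨Finset.mem_range.2 hmL, hact⟩
    have := Finset.le_max' A m this
    omega
  have hm'nw : m' ≤ nw := by
    by_contra hc
    push_neg at hc
    rcases hm'act with h | ⟨c, t, h, he⟩
    · rcases ho : oStep s π Df m' g with _ | t
      · exact absurd ho h
      · exact absurd (oStep_sub s π ho) (by rw [hgw.no_g_trans hc]; simp)
    · have := hgw.no_g_cond hc (oStep_sub s π h)
      exact he this
  -- the restricted state is gtop from m'+1 on
  have hconst : stN s (omg s π Df) (m'+1) g = gtop := by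
    rw [← hwalk_top]
    refine (stN_const (by omega) ?_).symm
    intro m hm hmu
    rw [stepAt_omg]
    rcases ho : oStep s π Df m g with _ | t
    · rfl
    · exact absurd (Or.inl (by rw [ho]; simp)) (hmax m (by omega))
  have hlen : m' < (omg s π Df).length := by rw [omg_length]; exact hm'L
  have hget : (omg s π Df).get ⟨m', hlen⟩ = oStep s π Df m' := by
    rw [← stepAt_eq_get _ hlen, stepAt_omg]
  refine ⟨m', hlen, ?_, ?_⟩
  · -- gtop is posted at m'
    rw [hget]
    rcases ho : oStep s π Df m' g with _ | t
    · -- activity must be a condition on g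
      rcases hm'act with h | ⟨c, t, h, he⟩
      · exact absurd ho h
      · rcases hk : t.enab g with _ | k
        · exact absurd hk he
        · have hπ := oStep_sub s π h
          have hkv : stN s π m' g = k := enab_eq htr hπ hk
          have hkept := ((oStep_some_iff s π).1 h).2
          have hgd : (g, m') ∈ Df := hst.hstab hkept hk
          have hw : stN s (omg s π Df) m' g = stN s π m' g :=
            walk_at_time htr m' g (Or.inr (mem_timesOf.2 hgd))
          have hsame : stN s (omg s π Df) (m'+1) g = stN s (omg s π Df) m' g := by
            refine stN_succ_none ?_
            rw [stepAt_omg]; exact ho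
          have : k = gtop := by rw [← hkv, ← hw, ← hsame, hconst]
          subst this
          exact mem_post_enab h hk ho
    · -- a kept g-transition
      have hdest : t.dest = gtop := by
        have : stN s (omg s π Df) (m'+1) g = t.dest :=
          stN_succ_some (by rw [stepAt_omg]; exact ho)
        rw [← this, hconst]
      have := mem_post_dest ho
      rw [hdest] at this
      exact this
  · -- no g-posts afterwards
    intro m hm hmm x hp
    have hgetm : (omg s π Df).get ⟨m, hm⟩ = oStep s π Df m := by
      rw [← stepAt_eq_get _ hm, stepAt_omg]
    rw [hgetm] at hp
    rcases post_cases hp with ⟨t, ht, _⟩ | ⟨b, t, hbt, he⟩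
    · exact hmax m hmm (Or.inl (by rw [ht]; simp))
    · exact hmax m hmm (Or.inr ⟨b, t, hbt, by rw [he]; simp⟩)

lemma omg_subTrace (Df : Finset (N.Auto × ℕ)) : SubTrace (omg s π Df) π := by
  refine ⟨fun i => Fin.cast (omg_length s π Df) i, ?_, ?_⟩
  · intro i j hij
    exact hij
  · intro i a t ht
    have h1 : (omg s π Df).get i = oStep s π Df i.1 := by
      rw [← stepAt_eq_get _ i.2, stepAt_omg]
    have hiL : (i : ℕ) < π.length :=
      lt_of_lt_of_le i.2 (le_of_eq (omg_length s π Df))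
    have h2 : π.get (Fin.cast (omg_length s π Df) i) = stepAt π i.1 := by
      rw [stepAt_eq_get π hiL]
      rfl
    rw [h2]
    rw [h1] at ht
    exact oStep_sub s π ht

/-- The minimality application: every occurrence of a minimal trace is kept. -/
lemma all_kept (htr : IsTrace T s π) (hst : Stable s π Df)
    (hgw : GW T s π g gtop nw) (hgm : (g, nw+1) ∈ Df) (hsg : s g ≠ gtop)
    (hmin : ¬ ∃ ϖ : List (Step N), IsTrace T s ϖ ∧ ϖ ≠ π ∧ ϖ.length ≤ π.length ∧
      (⟨g, gtop⟩ : LSt N) ∈ tracePost ϖ ∧ SubTrace ϖ π) :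
    ∀ (i : ℕ) (a : N.Auto) (t : N.Trans a),
      stepAt π i a = some t → KeptOcc s π Df a i t := by
  by_contra h
  push_neg at h
  obtain ⟨i, a, t, hsome, hnk⟩ := h
  refine hmin ⟨omg s π Df, omg_isTrace htr hst, ?_, le_of_eq (omg_length s π Df),
    omg_goal_tracePost htr hst hgw hgm hsg, omg_subTrace Df⟩
  intro he
  have : stepAt (omg s π Df) i a = stepAt π i a := by rw [he]
  rw [stepAt_omg, hsome] at this
  exact hnk ((oStep_some_iff s π).1 this).2

end OmgGoal

section Justification

variable {T : TransMap N} {s : GState N} {π : List (Step N)} {Ω : Set (Obj N)}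
  {B : Set (Obj N)} {g : N.Auto} {gtop : N.LS g} {nw : ℕ}

/-- The entry invariant for an automaton at a boundary time. -/
def EntryInv (T : TransMap N) (s : GState N) (π : List (Step N)) (Ω : Set (Obj N))
    (B : Set (Obj N)) (b : N.Auto) (v : ℕ) : Prop :=
  stN s π v b = s b ∨
    ∃ w : N.Trans b, (⟨b, w⟩ : Σ a : N.Auto, N.Trans a) ∈ trB T s Ω B ∧
      w.dest = stN s π v b

lemma obj_of_entryInv (hBc : BClosed T s Ω g gtop B) {b : N.Auto} {v u : ℕ}
    (hinv : EntryInv T s π Ω B b v)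
    (hu : (⟨b, (s b, stN s π u b)⟩ : Obj N) ∈ B) :
    (⟨b, (stN s π v b, stN s π u b)⟩ : Obj N) ∈ B := by
  rcases hinv with hl | ⟨w, hw, hwd⟩
  · rw [hl]; exact hu
  · rw [← hwd]
    exact hBc.2.2 b w hw (s b) (stN s π u b) hu

lemma entryInv_step (htr : IsTrace T s π) (hΩ : Fop T s Ω = Ω)
    (hBc : BClosed T s Ω g gtop B) {b : N.Auto} {v u : ℕ} (hvu : v ≤ u)
    (hinv : EntryInv T s π Ω B b v)
    (hu : (⟨b, (s b, stN s π u b)⟩ : Obj N) ∈ B) :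
    EntryInv T s π Ω B b u := by
  by_cases heq : stN s π v b = stN s π u b
  · rcases hinv with hl | ⟨w, hw, hwd⟩
    · exact Or.inl (by rw [← heq, hl])
    · exact Or.inr ⟨w, hw, by rw [hwd, heq]⟩
  · have hobj : (⟨b, (stN s π v b, stN s π u b)⟩ : Obj N) ∈ B :=
      obj_of_entryInv hBc hinv hu
    have hne : keptP s π b v u ≠ [] := by
      rw [Ne, keptP_nil_iff]
      push_neg
      exact ⟨not_le.1 (fun hc => heq (by rw [le_antisymm hc hvu])), heq⟩
    have hnem : ((keptP s π b v u).map Prod.snd) ≠ [] := by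
      simpa using hne
    obtain ⟨w, hwmem, hwd⟩ := (keptP_spath htr hvu).dest_mem hnem
    rcases List.mem_map.1 hwmem with ⟨p, hp, hpw⟩
    refine Or.inr ⟨w, ?_, hwd⟩
    rw [← hpw]
    exact keptP_mem_trB htr hΩ hvu hobj hp

/-- Justification of all kept occurrences, given justified demand objectives. -/
lemma jb_of_ja (htr : IsTrace T s π) (hΩ : Fop T s Ω = Ω)
    (hBc : BClosed T s Ω g gtop B) (Df : Finset (N.Auto × ℕ))
    (hja : ∀ p ∈ Df, (⟨p.1, (s p.1, stN s π p.2 p.1)⟩ : Obj N) ∈ B) :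
    ∀ (b : N.Auto) (i : ℕ) (t : N.Trans b), KeptOcc s π Df b i t →
      (⟨b, t⟩ : Σ a : N.Auto, N.Trans a) ∈ trB T s Ω B := by
  have hinv : ∀ (b : N.Auto) (v : ℕ), (v = 0 ∨ v ∈ timesOf Df b) →
      EntryInv T s π Ω B b v := by
    intro b v
    induction v using Nat.strong_induction_on with
    | _ v ihv =>
      intro hv
      rcases Nat.eq_zero_or_pos v with h0 | hpos
      · subst h0; exact Or.inl rfl
      rcases hv with h0 | hvt
      · omega
      set v' := prevT Df b (v-1) with hv'def
      have hv'le : v' ≤ v - 1 := prevT_le Df b (v-1)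
      have hv'lt : v' < v := by omega
      have hinv' : EntryInv T s π Ω B b v' := ihv v' hv'lt (prevT_mem Df b (v-1))
      have hvB : (⟨b, (s b, stN s π v b)⟩ : Obj N) ∈ B :=
        hja (b, v) (mem_timesOf.1 hvt)
      exact entryInv_step htr hΩ hBc (le_of_lt hv'lt) hinv' hvB
  intro b i t hko
  obtain ⟨u, hu1, hu2, hu3, hu4⟩ := hko
  have hvu : prevT Df b i ≤ u := le_trans (prevT_le Df b i) (le_of_lt hu2)
  have hobj : (⟨b, (stN s π (prevT Df b i) b, stN s π u b)⟩ : Obj N) ∈ B :=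
    obj_of_entryInv hBc (hinv b (prevT Df b i) (prevT_mem Df b i))
      (hja (b, u) (mem_timesOf.1 hu1))
  exact keptP_mem_trB htr hΩ hvu hobj hu4

/-- The stage induction: every demand objective is in `B`. -/
lemma ja_stage (htr : IsTrace T s π) (hΩ : Fop T s Ω = Ω)
    (hBc : BClosed T s Ω g gtop B) (hgw : GW T s π g gtop nw) :
    ∀ (α : ℕ), ∀ p ∈ Dit s π g nw α,
      (⟨p.1, (s p.1, stN s π p.2 p.1)⟩ : Obj N) ∈ B := by
  intro α
  induction α with
  | zero =>
    intro p hp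
    simp only [Dit, Finset.mem_singleton] at hp
    subst hp
    show (⟨g, (s g, stN s π (nw+1) g)⟩ : Obj N) ∈ B
    rw [hgw.st_succ_eq_gtop htr]
    exact hBc.1
  | succ α ih =>
    intro p hp
    rcases Finset.mem_union.1 hp with hp | hp
    · exact ih p hp
    · obtain ⟨hpL, b, t, hko, hne⟩ := (mem_condSet s π).1 hp
      have htB : (⟨b, t⟩ : Σ a : N.Auto, N.Trans a) ∈ trB T s Ω B :=
        jb_of_ja htr hΩ hBc _ ih b p.2 t hko
      rcases hk : t.enab p.1 with _ | k
      · exact absurd hk hne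
      · have hkB : (⟨p.1, (s p.1, k)⟩ : Obj N) ∈ B := hBc.2.1 b t htB p.1 k hk
        have hsome : stepAt π p.2 b = some t := by
          obtain ⟨u, hu1, hu2, hu3, hu4⟩ := hko
          exact (keptP_mem htr (le_trans (prevT_le _ b p.2) (le_of_lt hu2)) hu4).2.2
        have : stN s π p.2 p.1 = k := enab_eq htr hsome hk
        rw [this]
        exact hkB

end Justification

end GOR

open AN
/-- **Theorem 1** (goal-oriented reduction preserves minimal traces):
every minimal trace `π` from `s` reaching the goal `g_⊤` only uses
transitions of `tr(B)`. -/
theorem goal_oriented_reduction_preserves_minimal_traces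
    (N : AN) (T : TransMap N) (s : GState N)
    (g : N.Auto) (gtop : N.LS g) (hg : s g ≠ gtop)
    (Ω : Set (Obj N)) (hΩ : IsLeast {W : Set (Obj N) | Fop T s W = W} Ω)
    (B : Set (Obj N)) (hB : IsLeast {B' : Set (Obj N) | BClosed T s Ω g gtop B'} B)
    (π : List (Step N)) (hπ : MinimalTrace T s ⟨g, gtop⟩ π) :
    traceTrans π ⊆ trB T s Ω B := by
  classical
  obtain ⟨htr, hgoal, hmin⟩ := hπ
  obtain ⟨nw, hgw⟩ := GOR.GW.of_tracePost (T := T) (s := s) hgoal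
  obtain ⟨NN, hfix⟩ := GOR.exists_stable s π g nw hgw.hnw
  have hst := GOR.stable_of_fix htr hfix
  have hgm := GOR.goal_mem_Dit s π g nw NN
  have hΩfix : Fop T s Ω = Ω := hΩ.1
  have hBc : BClosed T s Ω g gtop B := hB.1
  have hja := GOR.ja_stage htr hΩfix hBc hgw NN
  have hall := GOR.all_kept htr hst hgw hgm hg hmin
  intro q hq
  obtain ⟨τ, hτ, hτq⟩ := hq
  obtain ⟨i, hi⟩ := List.mem_iff_get.1 hτ
  have hsome : GOR.stepAt π i.1 q.1 = some q.2 := by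
    rw [GOR.stepAt_eq_get π i.2, hi]; exact hτq
  have hko := hall i.1 q.1 q.2 hsome
  exact GOR.jb_of_ja htr hΩfix hBc _ hja q.1 i.1 q.2 hko
end

section
/- Existence of minimal sub-traces: Let (Σ,S,T) be an automata network, s a global state and g_⊤ a local state. For every trace π from s with g_⊤ ∈ post(π), there exists a trace ϖ from s that is minimal w.r.t. g_⊤ reachability and a strictly order-preserving injection φ: [1;|ϖ|] → [1;|π|] such that ϖ^i ⊆ π^{φ(i)} for all i ∈ [1;|ϖ|]. -/
/-!
Automata networks (ANs), steps, traces, minimal traces, local causality analysis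
and the goal-oriented reduction, following Paulevé, "Goal-Oriented Reduction of
Automata Networks".
-/

universe u v

open AN
section Aux
open AN

variable {N : AN}

/-- weight of a step: one plus the number of automata with a transition. -/
def stepWeight (τ : Step N) : ℕ :=
  1 + (Finset.univ.filter (fun a : N.Auto => (τ a).isSome)).card

def traceWeight (π : List (Step N)) : ℕ :=
  ∑ i : Fin π.length, stepWeight (π.get i)

lemma stepWeight_pos (τ : Step N) : 0 < stepWeight τ := Nat.succ_le.mp (Nat.le_add_right 1 _)

lemma stepSub_weight_le {σ τ : Step N} (h : Step.Sub σ τ) :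
    stepWeight σ ≤ stepWeight τ := by
  unfold stepWeight
  gcongr 1 + ?_
  apply Finset.card_le_card
  intro a ha
  simp only [Finset.mem_filter, Finset.mem_univ, true_and, Option.isSome_iff_exists] at *
  obtain ⟨t, ht⟩ := ha
  exact ⟨t, h ht⟩

lemma stepSub_weight_lt {σ τ : Step N} (h : Step.Sub σ τ) (hne : σ ≠ τ) :
    stepWeight σ < stepWeight τ := by
  unfold stepWeight
  have : (Finset.univ.filter (fun a : N.Auto => (σ a).isSome)).card
      < (Finset.univ.filter (fun a : N.Auto => (τ a).isSome)).card := by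
    apply Finset.card_lt_card
    constructor
    · intro a ha
      simp only [Finset.mem_filter, Finset.mem_univ, true_and, Option.isSome_iff_exists] at *
      obtain ⟨t, ht⟩ := ha
      exact ⟨t, h ht⟩
    · intro hsub
      apply hne
      funext a
      cases hσ : σ a with
      | some t => exact (h hσ).symm ▸ rfl
      | none =>
        cases hτ : τ a with
        | none => rfl
        | some t =>
          have : a ∈ Finset.univ.filter (fun a : N.Auto => (σ a).isSome) := by
            apply hsub
            simp [hτ]
          simp [hσ] at this
  omega

lemma subTrace_refl (π : List (Step N)) : SubTrace π π :=
  ⟨id, strictMono_id, fun _ _ _ h => h⟩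

lemma subTrace_trans {π₁ π₂ π₃ : List (Step N)}
    (h₁ : SubTrace π₁ π₂) (h₂ : SubTrace π₂ π₃) : SubTrace π₁ π₃ := by
  obtain ⟨φ, hφ, hsub⟩ := h₁
  obtain ⟨ψ, hψ, hsub'⟩ := h₂
  exact ⟨ψ ∘ φ, hψ.comp hφ, fun i _ _ h => hsub' (φ i) (hsub i h)⟩

lemma subTrace_weight_lt {ϖ π : List (Step N)} (h : SubTrace ϖ π)
    (hne : ϖ ≠ π) (hlen : ϖ.length ≤ π.length) :
    traceWeight ϖ < traceWeight π := by
  obtain ⟨φ, hφ, hsub⟩ := h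
  unfold traceWeight
  rcases lt_or_eq_of_le hlen with hlt | heq
  · -- strictly shorter: use injectivity of φ
    calc ∑ i : Fin ϖ.length, stepWeight (ϖ.get i)
        ≤ ∑ i : Fin ϖ.length, stepWeight (π.get (φ i)) :=
          Finset.sum_le_sum (fun i _ => stepSub_weight_le (hsub i))
      _ = ∑ j ∈ Finset.univ.image φ, stepWeight (π.get j) := by
          rw [Finset.sum_image (fun a _ b _ hab => hφ.injective hab)]
      _ < ∑ j : Fin π.length, stepWeight (π.get j) := by
          have hne' : Finset.univ.image φ ≠ Finset.univ := by
            intro hcontra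
            have : (Finset.univ.image φ).card ≤ Finset.univ.card (α := Fin ϖ.length) :=
              Finset.card_image_le
            rw [hcontra] at this
            simp only [Finset.card_univ, Fintype.card_fin] at this
            omega
          obtain ⟨j, hj_univ, hj⟩ :=
            Finset.exists_of_ssubset ((Finset.subset_univ _).ssubset_of_ne hne')
          exact Finset.sum_lt_sum_of_subset (Finset.subset_univ _) hj_univ hj
            (stepWeight_pos _) (fun _ _ _ => Nat.zero_le _)
  · -- equal lengths: φ must be the identity cast
    have hkey : ∀ i : Fin ϖ.length, φ i = Fin.cast heq i := by
      set φ' : Fin ϖ.length → Fin ϖ.length := fun i => Fin.cast heq.symm (φ i) with hφ'def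
      have hφ' : StrictMono φ' := fun a b hab =>
        show ((φ a).val < (φ b).val) from hφ hab
      have hbij : Function.Bijective φ' :=
        (Fintype.bijective_iff_injective_and_card φ').mpr ⟨hφ'.injective, rfl⟩
      have hwf : WellFoundedLT (Fin ϖ.length) := inferInstance
      have hid : φ' = id := (hφ'.range_inj strictMono_id).mp
        (by rw [Set.range_id]; exact Set.range_eq_univ.mpr hbij.surjective)
      intro i
      have h1 : φ' i = i := congrFun hid i
      simp only [hφ'def] at h1
      have h2 := congrArg Fin.val h1
      simp only [Fin.coe_cast] at h2
      exact Fin.ext (by simp [Fin.coe_cast, h2])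
    obtain ⟨i, hi⟩ : ∃ i : Fin ϖ.length, ϖ.get i ≠ π.get (Fin.cast heq i) := by
      by_contra hall
      push_neg at hall
      exact hne (List.ext_get heq (fun n h1 h2 => hall ⟨n, h1⟩))
    calc ∑ i : Fin ϖ.length, stepWeight (ϖ.get i)
        < ∑ i : Fin ϖ.length, stepWeight (π.get (Fin.cast heq i)) := by
          apply Finset.sum_lt_sum
            (fun j _ => stepSub_weight_le (hkey j ▸ hsub j))
          exact ⟨i, Finset.mem_univ i, stepSub_weight_lt (hkey i ▸ hsub i) hi⟩
      _ = ∑ j : Fin π.length, stepWeight (π.get j) :=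
          Fintype.sum_bijective (finCongr heq) (finCongr heq).bijective _ _ (fun _ => rfl)

end Aux

/-- **Existence of minimal sub-traces**: every trace reaching a local state `p`
contains a sub-trace which is a minimal trace for `p` reachability. -/
theorem exists_minimal_subtrace
    (N : AN) (T : TransMap N) (s : GState N) (p : N.LSt)
    (π : List (Step N)) (hπ : IsTrace T s π) (hp : p ∈ tracePost π) :
    ∃ ϖ : List (Step N), MinimalTrace T s p ϖ ∧ SubTrace ϖ π := by
  obtain ⟨n, hn⟩ : ∃ n, traceWeight π ≤ n := ⟨traceWeight π, le_refl _⟩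
  induction n generalizing π with
  | zero =>
    by_cases hmin : MinimalTrace T s p π
    · exact ⟨π, hmin, subTrace_refl π⟩
    · exfalso
      have hC : ∃ ϖ : List (Step N), IsTrace T s ϖ ∧ ϖ ≠ π ∧ ϖ.length ≤ π.length ∧
          p ∈ tracePost ϖ ∧ SubTrace ϖ π := by
        by_contra hC
        exact hmin ⟨hπ, hp, hC⟩
      obtain ⟨ϖ, _, hne, hlen, _, hsub⟩ := hC
      have := subTrace_weight_lt hsub hne hlen
      omega
  | succ n ih =>
    by_cases hmin : MinimalTrace T s p π
    · exact ⟨π, hmin, subTrace_refl π⟩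
    · have hC : ∃ ϖ : List (Step N), IsTrace T s ϖ ∧ ϖ ≠ π ∧ ϖ.length ≤ π.length ∧
          p ∈ tracePost ϖ ∧ SubTrace ϖ π := by
        by_contra hC
        exact hmin ⟨hπ, hp, hC⟩
      obtain ⟨ϖ, hϖtr, hne, hlen, hppost, hsub⟩ := hC
      have hw := subTrace_weight_lt hsub hne hlen
      obtain ⟨ϖ', hmin', hsub'⟩ := ih ϖ hϖtr hppost (by omega)
      exact ⟨ϖ', hmin', subTrace_trans hsub' hsub⟩
end

section
/- Property 1 (traces follow local acyclic paths): Let (Σ,S,T) be an automata network and π a trace from a global state s. For any a ∈ Σ, a_i, a_j ∈ S(a), and indices 1 ≤ n ≤ m ≤ |π| with a_i ∈ •π^n and a_j ∈ (π^m)•, there exists a local acyclic path η ∈ local-paths(a_i↝a_j) that is a sub-sequence of π^{n..m}, i.e., there is an injection φ: [1;|η|] → [n;m] such that φ is strictly order-preserving and η^u ∈ π^{φ(u)} for all u ∈ [1;|η|]. -/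
/-!
Automata networks (ANs), steps, traces, minimal traces, local causality analysis
and the goal-oriented reduction, following Paulevé, "Goal-Oriented Reduction of
Automata Networks".
-/

universe u v

open AN

section Aux

variable {N : AN} {T : TransMap N} {s : GState N} {π : List (Step N)}

lemma aux_applyTrace_succ (s : GState N) (π : List (Step N)) (k : ℕ)
    (hk : k < π.length) :
    applyTrace s (π.take (k + 1)) = applyStep (applyTrace s (π.take k)) π[k] := by
  have h : π.take (k + 1) = π.take k ++ [π[k]] := by
    rw [List.take_succ, List.getElem?_eq_getElem hk]; rfl
  unfold applyTrace
  rw [h, List.foldl_append]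
  rfl

lemma aux_mem_pre_orig {b : N.Auto} {t : N.Trans b} {τ : Step N}
    (h : τ b = some t) : (⟨b, t.orig⟩ : N.LSt) ∈ τ.pre := by
  refine Set.mem_iUnion.2 ⟨b, Set.mem_iUnion.2 ⟨t, Set.mem_iUnion.2 ⟨h, ?_⟩⟩⟩
  exact Set.mem_insert _ _

lemma aux_mem_pre_enab {b c : N.Auto} {t : N.Trans b} {τ : Step N}
    (h : τ b = some t) {x : N.LS c} (he : t.enab c = some x) :
    (⟨c, x⟩ : N.LSt) ∈ τ.pre := by
  refine Set.mem_iUnion.2 ⟨b, Set.mem_iUnion.2 ⟨t, Set.mem_iUnion.2 ⟨h, ?_⟩⟩⟩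
  exact Or.inr he

lemma aux_state_orig (hπ : IsTrace T s π) {k : ℕ} (hk : k < π.length)
    {b : N.Auto} {t : N.Trans b} (h : π[k] b = some t) :
    applyTrace s (π.take k) b = t.orig :=
  (hπ k hk).2 _ (aux_mem_pre_orig h)

lemma aux_state_enab (hπ : IsTrace T s π) {k : ℕ} (hk : k < π.length)
    {b : N.Auto} {t : N.Trans b} (h : π[k] b = some t)
    {c : N.Auto} {x : N.LS c} (he : t.enab c = some x) :
    applyTrace s (π.take k) c = x :=
  (hπ k hk).2 _ (aux_mem_pre_enab h he)

lemma aux_state_succ_some (s : GState N) {k : ℕ} (hk : k < π.length)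
    {b : N.Auto} {t : N.Trans b} (h : π[k] b = some t) :
    applyTrace s (π.take (k + 1)) b = t.dest := by
  rw [aux_applyTrace_succ s π k hk]
  simp [applyStep, h]

lemma aux_state_succ_none (s : GState N) {k : ℕ} (hk : k < π.length)
    {b : N.Auto} (h : π[k] b = none) :
    applyTrace s (π.take (k + 1)) b = applyTrace s (π.take k) b := by
  rw [aux_applyTrace_succ s π k hk]
  simp [applyStep, h]

lemma aux_post_state (hπ : IsTrace T s π) {k : ℕ} (hk : k < π.length)
    {b : N.Auto} {x : N.LS b} (h : (⟨b, x⟩ : N.LSt) ∈ (π[k]).post) :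
    applyTrace s (π.take (k + 1)) b = x := by
  obtain ⟨hin, hnot⟩ := h
  simp only [Set.mem_iUnion] at hin
  obtain ⟨c, t, hct, hmem⟩ := hin
  rcases hmem with heq | henab
  · cases heq
    exact aux_state_succ_some s hk hct
  · have hs : applyTrace s (π.take k) b = x := aux_state_enab hπ hk hct henab
    cases hb : π[k] b with
    | none => rw [aux_state_succ_none s hk hb, hs]
    | some t' =>
        exfalso
        have ho : applyTrace s (π.take k) b = t'.orig := aux_state_orig hπ hk hb
        exact hnot ⟨t', hb, by rw [← ho, hs]⟩

/-- Invariant for the chain construction: an indexed, strictly increasing,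
chained, acyclic list of `a`-transitions fired between steps `n` and `k - 1`,
leading from `i` to the state of `a` after `k` steps. -/
def ChainSpec (T : TransMap N) (s : GState N) (π : List (Step N))
    {a : N.Auto} (i : N.LS a) (n k : ℕ) (L : List (ℕ × N.Trans a)) : Prop :=
  L.Pairwise (fun p q => p.1 < q.1) ∧
  (∀ p ∈ L, n ≤ p.1 ∧ p.1 < k ∧ ∃ h : p.1 < π.length, π[p.1] a = some p.2) ∧
  L.Chain' (fun p q => p.2.dest = q.2.orig) ∧
  (L = [] → i = applyTrace s (π.take k) a) ∧
  (∀ h : L ≠ [], (L.head h).2.orig = i ∧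
    (L.getLast h).2.dest = applyTrace s (π.take k) a) ∧
  (∀ u v : Fin L.length, v < u → (L.get u).2.dest ≠ (L.get v).2.orig)

lemma chain_exists (hπ : IsTrace T s π) {a : N.Auto} {i : N.LS a} {n : ℕ}
    (hi0 : applyTrace s (π.take n) a = i) (m : ℕ) (hm : m < π.length) :
    ∀ k, n ≤ k → k ≤ m + 1 → ∃ L, ChainSpec T s π i n k L := by
  intro k hk
  induction k, hk using Nat.le_induction with
  | base =>
      intro _
      refine ⟨[], List.Pairwise.nil, by simp, List.isChain_nil, fun _ => hi0.symm,
        fun h => absurd rfl h, fun u => u.elim0⟩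
  | succ k hk ih =>
      intro hk1
      have hkm : k < π.length := lt_of_le_of_lt (Nat.lt_succ_iff.1 hk1) hm
      obtain ⟨L, hP, hB, hC, hE0, hE1, hA⟩ := ih (Nat.le_of_succ_le hk1)
      cases hb : π[k] a with
      | none =>
          refine ⟨L, hP, fun p hp => ?_, hC, ?_, ?_, hA⟩
          · obtain ⟨h1, h2, h3⟩ := hB p hp
            exact ⟨h1, Nat.lt_succ_of_lt h2, h3⟩
          · intro hL
            rw [aux_state_succ_none s hkm hb]; exact hE0 hL
          · intro hL
            rw [aux_state_succ_none s hkm hb]; exact hE1 hL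
      | some t =>
          have hgk : applyTrace s (π.take k) a = t.orig := aux_state_orig hπ hkm hb
          have hgk1 : applyTrace s (π.take (k + 1)) a = t.dest :=
            aux_state_succ_some s hkm hb
          by_cases hcyc : ∃ q : Fin L.length, (L.get q).2.orig = t.dest
          · obtain ⟨q, hq⟩ := hcyc
            have hqle : (q : ℕ) ≤ L.length := le_of_lt q.isLt
            have hlen : (L.take q).length = q := by
              simp [List.length_take, Nat.min_eq_left hqle]
            have hget : ∀ u : ℕ, ∀ hu : u < (L.take q).length,
                (L.take q)[u] = L[u]'(lt_of_lt_of_le (hlen ▸ hu) hqle) := by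
              intro u hu
              simp [List.getElem_take]
            refine ⟨L.take q, hP.sublist (List.take_sublist _ _),
              fun p hp => ?_, hC.take _, ?_, ?_, ?_⟩
            · obtain ⟨h1, h2, h3⟩ := hB p (List.mem_of_mem_take hp)
              exact ⟨h1, Nat.lt_succ_of_lt h2, h3⟩
            · -- empty case
              intro hL
              have hq0 : (q : ℕ) = 0 := by
                by_contra h0
                rcases List.take_eq_nil_iff.1 hL with h | h
                · exact h0 h
                · exact absurd q.isLt (by simp [h])
              have hLne : L ≠ [] := List.ne_nil_of_length_pos (hq0 ▸ q.isLt)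
              have h0 : (L.head hLne) = L.get q := by
                rw [List.get_eq_getElem, List.head_eq_getElem]
                congr 1
                exact hq0.symm
              rw [hgk1, ← hq, ← h0, (hE1 hLne).1]
            · -- nonempty case
              intro hL
              have hq0 : 0 < (q : ℕ) := by
                rcases Nat.eq_zero_or_pos (q : ℕ) with h | h
                · exact absurd (by simp [h]) hL
                · exact h
              have hLne : L ≠ [] := List.ne_nil_of_length_pos (Nat.lt_of_le_of_lt (Nat.zero_le _) q.isLt)
              constructor
              · rw [List.head_eq_getElem, hget 0 (by omega), ← List.head_eq_getElem]
                exact (hE1 hLne).1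
              · rw [List.getLast_eq_getElem, hget _ (by omega), hgk1, ← hq]
                have hch := List.isChain_iff_getElem.1 hC ((q : ℕ) - 1) (by omega)
                simp only [List.get_eq_getElem,
                  show (q : ℕ) - 1 + 1 = (q : ℕ) from by omega] at hch
                simp only [List.get_eq_getElem, hlen]
                exact hch
            · -- acyclicity
              intro u v huv
              have hu := hget u u.isLt
              have hv := hget v v.isLt
              simp only [List.get_eq_getElem, hu, hv]
              exact hA ⟨u, _⟩ ⟨v, _⟩ huv
          · -- append case
            refine ⟨L ++ [(k, t)], ?_, ?_, ?_, ?_, ?_, ?_⟩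
            · rw [List.pairwise_append]
              refine ⟨hP, List.pairwise_singleton _ _, fun p hp x hx => ?_⟩
              rcases List.mem_singleton.1 hx with rfl
              exact (hB p hp).2.1
            · intro p hp
              rcases List.mem_append.1 hp with h | h
              · obtain ⟨h1, h2, h3⟩ := hB p h
                exact ⟨h1, Nat.lt_succ_of_lt h2, h3⟩
              · rcases List.mem_singleton.1 h with rfl
                exact ⟨hk, Nat.lt_succ_self _, hkm, hb⟩
            · rw [List.Chain', List.isChain_append]
              refine ⟨hC, List.isChain_singleton _, fun x hx y hy => ?_⟩
              simp only [List.head?_cons, Option.mem_def, Option.some_inj] at hy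
              subst hy
              rcases eq_or_ne L [] with rfl | hLn
              · simp at hx
              · rw [List.getLast?_eq_getLast hLn] at hx
                simp only [Option.mem_def, Option.some_inj] at hx
                subst hx
                exact ((hE1 hLn).2).trans hgk
            · intro h
              exact absurd h (by simp)
            · intro h
              constructor
              · rcases eq_or_ne L [] with rfl | hLn
                · simp only [List.nil_append, List.head_cons]
                  rw [← hgk]
                  exact (hE0 rfl).symm
                · rw [List.head_append_of_ne_nil hLn]
                  exact (hE1 hLn).1
              · rw [List.getLast_append_singleton]
                exact hgk1.symm
            · intro u v huv
              have hlen : (L ++ [(k, t)]).length = L.length + 1 := by simp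
              simp only [List.get_eq_getElem]
              rcases Nat.lt_or_ge (u : ℕ) L.length with hu | hu
              · have hv : (v : ℕ) < L.length := lt_trans huv hu
                rw [List.getElem_append_left hu, List.getElem_append_left hv]
                exact hA ⟨u, hu⟩ ⟨v, hv⟩ huv
              · have hu' : (u : ℕ) = L.length := by
                  have := u.isLt; omega
                have hv : (v : ℕ) < L.length := by omega
                rw [List.getElem_append_left hv]
                have : (L ++ [(k, t)])[(u : ℕ)] = (k, t) := by
                  rw [List.getElem_append_right (by omega)]
                  simp [hu']
                rw [this]
                intro hcon
                exact hcyc ⟨⟨v, hv⟩, hcon.symm⟩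

end Aux

/-- **Property 1** (traces follow local acyclic paths): if a trace has
`a_i ∈ •π^n` and `a_j ∈ (π^m)•` with `n ≤ m`, then some local acyclic path
`η ∈ local-paths(a_i ↝ a_j)` is a sub-sequence of `π^{n..m}`
(indices are 0-based). -/
theorem trace_follows_local_acyclic_path
    (N : AN) (T : TransMap N) (s : GState N)
    (π : List (Step N)) (hπ : IsTrace T s π)
    (a : N.Auto) (i j : N.LS a)
    (n m : ℕ) (hnm : n ≤ m) (hm : m < π.length)
    (hi : (⟨a, i⟩ : N.LSt) ∈ (π.get ⟨n, lt_of_le_of_lt hnm hm⟩).pre)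
    (hj : (⟨a, j⟩ : N.LSt) ∈ (π.get ⟨m, hm⟩).post) :
    ∃ η : List (N.Trans a), IsLocalPath T i j η ∧
      ∃ φ : Fin η.length → ℕ, StrictMono φ ∧
        (∀ u : Fin η.length, n ≤ φ u ∧ φ u ≤ m) ∧
        ∀ u : Fin η.length, ∃ h : φ u < π.length,
          (π.get ⟨φ u, h⟩) a = some (η.get u) := by
  by_cases hij : i = j
  · subst hij
    refine ⟨[], ⟨by simp, Or.inl ⟨rfl, rfl⟩⟩, fun u => u.elim0, ?_, ?_, ?_⟩
    · intro u; exact u.elim0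
    · intro u; exact u.elim0
    · intro u; exact u.elim0
  · have hi' : applyTrace s (π.take n) a = i :=
      (hπ n (lt_of_le_of_lt hnm hm)).2 _ hi
    have hj' : applyTrace s (π.take (m + 1)) a = j := aux_post_state hπ hm hj
    obtain ⟨L, hP, hB, hC, hE0, hE1, hA⟩ :=
      chain_exists hπ hi' m hm (m + 1) (le_trans hnm (Nat.le_succ m)) le_rfl
    have hLne : L ≠ [] := fun h => hij ((hE0 h).trans hj')
    have hmap : L.map Prod.snd ≠ [] := by simp [hLne]
    have hlencast : (L.map Prod.snd).length = L.length := List.length_map _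
    refine ⟨L.map Prod.snd, ⟨?_, Or.inr ⟨hij, hmap, ?_, ?_, ?_, ?_⟩⟩,
      fun u => (L.get (Fin.cast hlencast u)).1, ?_, ?_, ?_⟩
    · intro t ht
      obtain ⟨p, hp, rfl⟩ := List.mem_map.1 ht
      obtain ⟨_, _, hlt, hsome⟩ := hB p hp
      exact (hπ p.1 hlt).1 hsome
    · rw [List.head_map]
      exact (hE1 hLne).1
    · rw [List.getLast_map]
      exact ((hE1 hLne).2).trans hj'
    · intro u h
      have h' : u + 1 < L.length := by simpa using h
      have hch := List.isChain_iff_getElem.1 hC u (by omega)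
      simp only [List.get_eq_getElem, List.getElem_map] at hch ⊢
      exact hch
    · intro u v hvu
      simp only [List.get_eq_getElem, List.getElem_map]
      exact hA ⟨u, by simpa using u.isLt⟩ ⟨v, by simpa using v.isLt⟩ hvu
    · intro u v huv
      exact List.pairwise_iff_get.1 hP (Fin.cast hlencast u) (Fin.cast hlencast v) huv
    · intro u
      obtain ⟨h1, h2, _⟩ := hB _ (List.get_mem L _)
      exact ⟨h1, Nat.lt_succ_iff.1 h2⟩
    · intro u
      obtain ⟨h1, h2, hlt, hsome⟩ := hB _ (List.get_mem L _)
      refine ⟨hlt, ?_⟩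
      simp only [List.get_eq_getElem, List.getElem_map]
      exact hsome
end

section
/- Proposition 1 (soundness of the fixed-point over-approximation Ω_s): Let (Σ,S,T) be an automata network and s a global state. For every objective a_i↝a_j, if there exists a trace π from s and indices m, n ∈ [1;|π|] with m ≤ n, a_i ∈ •π^m, and a_j ∈ (π^n)•, then a_i↝a_j ∈ Ω_s, where Ω_s is the least fixed point of the function F. In other words, membership in Ω_s is a necessary condition for an objective to be concretized by some trace from s. -/
/-!
Automata networks (ANs), steps, traces, minimal traces, local causality analysis
and the goal-oriented reduction, following Paulevé, "Goal-Oriented Reduction of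
Automata Networks".
-/

universe u v

open AN

section Prop1Proof
open AN
variable {N : AN}

/-- Walks: chained sequences of local transitions. -/
def ChainW {a : N.Auto} : N.LS a → List (N.Trans a) → N.LS a → Prop
  | i, [], j => i = j
  | i, t :: l, j => t.orig = i ∧ ChainW t.dest l j

lemma chainW_concat {a : N.Auto} {i x : N.LS a} {η : List (N.Trans a)} {t : N.Trans a}
    (h : ChainW i η x) (ht : t.orig = x) : ChainW i (η ++ [t]) t.dest := by
  induction η generalizing i with
  | nil => exact ⟨ht.trans h.symm, rfl⟩
  | cons u l ih => exact ⟨h.1, ih h.2⟩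

lemma chainW_suffix {a : N.Auto} {x j i : N.LS a} {η : List (N.Trans a)}
    (h : ChainW x η j) (hi : i = x ∨ i ∈ η.map AN.Trans.dest) :
    ∃ v, ChainW i v j ∧ v.length ≤ η.length ∧ ∀ t ∈ v, t ∈ η := by
  induction η generalizing x with
  | nil =>
    rcases hi with rfl | hi
    · exact ⟨[], h, le_refl _, by simp⟩
    · simp at hi
  | cons u l ih =>
    rcases hi with rfl | hi
    · exact ⟨u :: l, h, le_refl _, fun t ht => ht⟩
    · simp only [List.map_cons, List.mem_cons] at hi
      rcases ih h.2 (by tauto) with ⟨v, hv, hlen, hsub⟩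
      exact ⟨v, hv, by simp; omega, fun t ht => List.mem_cons_of_mem _ (hsub t ht)⟩

lemma chainW_extract {a : N.Auto} :
    ∀ (M : ℕ) (η : List (N.Trans a)), η.length ≤ M → ∀ {i j : N.LS a}, ChainW i η j →
    ∃ η', ChainW i η' j ∧ η'.length ≤ η.length ∧ (∀ t ∈ η', t ∈ η) ∧
      (i :: η'.map AN.Trans.dest).Nodup := by
  intro M
  induction M with
  | zero =>
    intro η hη i j h
    have : η = [] := List.length_eq_zero_iff.1 (Nat.le_zero.1 hη)
    subst this
    exact ⟨[], h, le_refl _, by simp, List.nodup_singleton i⟩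
  | succ M ih =>
    intro η hη i j h
    cases η with
    | nil => exact ⟨[], h, le_refl _, by simp, List.nodup_singleton i⟩
    | cons t l =>
      have hη' : l.length ≤ M := by simp at hη; omega
      obtain ⟨η₁, hc, hlen, hsub, hnd⟩ := ih l hη' h.2
      by_cases hmem : i = t.dest ∨ i ∈ η₁.map AN.Trans.dest
      · obtain ⟨v, hv, hvlen, hvsub⟩ := chainW_suffix hc hmem
        obtain ⟨η', h1, h2, h3, h4⟩ := ih v (by omega) hv
        refine ⟨η', h1, by simp; omega,
          fun u hu => List.mem_cons_of_mem _ (hsub u (hvsub u (h3 u hu))), h4⟩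
      · push_neg at hmem
        refine ⟨t :: η₁, ⟨h.1, hc⟩, by simp; omega, ?_, ?_⟩
        · intro u hu
          rcases List.mem_cons.1 hu with rfl | hu
          · exact List.mem_cons_self
          · exact List.mem_cons_of_mem _ (hsub u hu)
        · refine List.nodup_cons.2 ⟨?_, hnd⟩
          simp only [List.map_cons, List.mem_cons]
          tauto

lemma chainW_getLast {a : N.Auto} {i j : N.LS a} {η : List (N.Trans a)}
    (h : ChainW i η j) (hne : η ≠ []) : (η.getLast hne).dest = j := by
  induction η generalizing i with
  | nil => exact absurd rfl hne
  | cons t l ih =>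
    cases l with
    | nil => exact h.2
    | cons u l' =>
      rw [List.getLast_cons (by simp)]
      exact ih h.2 (by simp)

lemma chainW_orig_get {a : N.Auto} {i j : N.LS a} {η : List (N.Trans a)}
    (h : ChainW i η j) :
    ∀ (k : ℕ) (hk : k < η.length), (η.get ⟨k, hk⟩).orig =
      (i :: η.map AN.Trans.dest).get ⟨k, by simp; omega⟩ := by
  induction η generalizing i with
  | nil => intro k hk; simp at hk
  | cons t l ih =>
    intro k hk
    cases k with
    | zero => exact h.1
    | succ k =>
      have := ih h.2 k (by simpa using hk)
      simpa using this

lemma chainW_consec {a : N.Auto} {i j : N.LS a} {η : List (N.Trans a)}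
    (h : ChainW i η j) :
    ∀ (k : ℕ) (hk : k + 1 < η.length),
      (η.get ⟨k, Nat.lt_of_succ_lt hk⟩).dest = (η.get ⟨k + 1, hk⟩).orig := by
  induction η generalizing i with
  | nil => intro k hk; simp at hk
  | cons t l ih =>
    intro k hk
    cases k with
    | zero =>
      cases l with
      | nil => simp at hk
      | cons u l' => exact (h.2.1).symm
    | succ k => exact ih h.2 k (by simpa using hk)

lemma chainW_acyclic {a : N.Auto} {i j : N.LS a} {η : List (N.Trans a)}
    (h : ChainW i η j) (hnd : (i :: η.map AN.Trans.dest).Nodup) :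
    ∀ n m : Fin η.length, m < n → (η.get n).dest ≠ (η.get m).orig := by
  intro n m hlt hEq
  have h1 : (η.get n).dest = (i :: η.map AN.Trans.dest).get ⟨n + 1, by simp⟩ := by
    simp [List.getElem_map]
  have h2 := chainW_orig_get h m m.isLt
  have h3 : (i :: η.map AN.Trans.dest).get ⟨(n : ℕ) + 1, by simp⟩ =
      (i :: η.map AN.Trans.dest).get ⟨(m : ℕ), by simp⟩ := by
    rw [← h1, hEq, h2]
  have := (List.Nodup.get_inj_iff hnd).1 h3
  simp [Fin.ext_iff] at this
  omega

variable {T : TransMap N} {s : GState N}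

lemma applyTrace_take_succ {π : List (Step N)} {k : ℕ} (hk : k < π.length) :
    applyTrace s (π.take (k + 1)) =
      applyStep (applyTrace s (π.take k)) (π.get ⟨k, hk⟩) := by
  rw [applyTrace, List.take_succ, List.foldl_append]
  simp [List.getElem?_eq_getElem hk, applyTrace, List.get_eq_getElem]

lemma playable_orig {s0 : GState N} {τ : Step N} (hp : Playable s0 τ)
    {b : N.Auto} {t : N.Trans b} (h : τ b = some t) : s0 b = t.orig :=
  hp ⟨b, t.orig⟩ (Set.mem_iUnion.2 ⟨b, Set.mem_iUnion.2 ⟨t,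
    Set.mem_iUnion.2 ⟨h, Set.mem_insert _ _⟩⟩⟩)

lemma playable_enab {s0 : GState N} {τ : Step N} (hp : Playable s0 τ)
    {b : N.Auto} {t : N.Trans b} (h : τ b = some t)
    {c : N.Auto} {x : N.LS c} (he : t.enab c = some x) : s0 c = x :=
  hp ⟨c, x⟩ (Set.mem_iUnion.2 ⟨b, Set.mem_iUnion.2 ⟨t,
    Set.mem_iUnion.2 ⟨h, Set.mem_insert_of_mem _ he⟩⟩⟩)

lemma walk_exists {π : List (Step N)} (hπ : IsTrace T s π) (a : N.Auto) (m : ℕ) :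
    ∀ d, m + d ≤ π.length →
    ∃ η : List (N.Trans a),
      ChainW (applyTrace s (π.take m) a) η (applyTrace s (π.take (m + d)) a) ∧
      ∀ t ∈ η, t ∈ T a ∧ ∀ (b : N.Auto) (c : N.LS b), t.enab b = some c →
        ∃ k, m ≤ k ∧ k < m + d ∧ applyTrace s (π.take k) b = c := by
  intro d
  induction d with
  | zero => intro _; exact ⟨[], rfl, by simp⟩
  | succ d ih =>
    intro hd
    obtain ⟨η, hc, hP⟩ := ih (by omega)
    have hk : m + d < π.length := by omega
    obtain ⟨hwf, hpl⟩ := hπ (m + d) hk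
    have hstep := applyTrace_take_succ (s := s) hk
    rcases hτ : (π.get ⟨m + d, hk⟩) a with _ | t
    · refine ⟨η, ?_, fun t ht => ⟨(hP t ht).1, fun b c he => ?_⟩⟩
      · have heq : applyTrace s (π.take (m + (d + 1))) a =
            applyTrace s (π.take (m + d)) a := by
          rw [show m + (d + 1) = (m + d) + 1 by ring, hstep]
          simp [applyStep, hτ]
        rw [heq]; exact hc
      · obtain ⟨k, h1, h2, h3⟩ := (hP t ht).2 b c he
        exact ⟨k, h1, by omega, h3⟩
    · have horig : t.orig = applyTrace s (π.take (m + d)) a := (playable_orig hpl hτ).symm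
      refine ⟨η ++ [t], ?_, ?_⟩
      · have heq : applyTrace s (π.take (m + (d + 1))) a = t.dest := by
          rw [show m + (d + 1) = (m + d) + 1 by ring, hstep]
          simp [applyStep, hτ]
        rw [heq]; exact chainW_concat hc horig
      · intro u hu
        rcases List.mem_append.1 hu with hu | hu
        · obtain ⟨h1, h2⟩ := hP u hu
          refine ⟨h1, fun b c he => ?_⟩
          obtain ⟨k, k1, k2, k3⟩ := h2 b c he
          exact ⟨k, k1, by omega, k3⟩
        · simp at hu; subst hu
          exact ⟨hwf hτ, fun b c he => ⟨m + d, by omega, by omega, playable_enab hpl hτ he⟩⟩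

lemma prop1_main {Ω : Set (Obj N)} (hΩ : Fop T s Ω = Ω) {π : List (Step N)}
    (hπ : IsTrace T s π) :
    ∀ n, n ≤ π.length → ∀ m, m ≤ n → ∀ a : N.Auto,
      (⟨a, (applyTrace s (π.take m) a, applyTrace s (π.take n) a)⟩ : Obj N) ∈ Ω := by
  intro n
  induction n using Nat.strong_induction_on with
  | _ n IH =>
  intro hn m hm a
  obtain ⟨η, hc, hP⟩ := walk_exists hπ a m (n - m) (by omega)
  rw [show m + (n - m) = n by omega] at hc hP
  obtain ⟨η', hc', hlen', hsub', hnd'⟩ := chainW_extract η.length η (le_refl _) hc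
  rw [← hΩ]
  refine ⟨η', ⟨fun t ht => (hP t (hsub' t ht)).1, ?_⟩, ?_⟩
  · cases η' with
    | nil => exact Or.inl ⟨hc', rfl⟩
    | cons t l =>
      right
      have hne : (t :: l) ≠ [] := by simp
      have hlast := chainW_getLast hc' hne
      have hij : applyTrace s (π.take m) a ≠ applyTrace s (π.take n) a := by
        intro hEq
        have hmem : applyTrace s (π.take n) a ∈ (t :: l).map AN.Trans.dest := by
          rw [← hlast]; exact List.mem_map_of_mem (List.getLast_mem hne)
        exact (List.nodup_cons.1 hnd').1 (hEq ▸ hmem)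
      exact ⟨hij, hne, hc'.1, hlast, chainW_consec hc', chainW_acyclic hc' hnd'⟩
  · intro t ht b c he
    obtain ⟨k, hk1, hk2, hk3⟩ := (hP t (hsub' t ht)).2 b c he
    have hmem := IH k (by omega) (by omega) 0 (by omega) b
    rw [hk3] at hmem
    simpa [applyTrace] using hmem

end Prop1Proof

/-- **Proposition 1** (soundness of the fixed-point over-approximation `Ω_s`):
if some trace from `s` concretizes the objective `a_i ↝ a_j` (i.e. has
`a_i ∈ •π^m` and `a_j ∈ (π^n)•` with `m ≤ n`), then `a_i ↝ a_j` belongs to the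
least fixed point `Ω` of `F` (indices are 0-based). -/
theorem objective_mem_lfp_of_trace
    (N : AN) (T : TransMap N) (s : GState N)
    (Ω : Set (Obj N)) (hΩ : IsLeast {W : Set (Obj N) | Fop T s W = W} Ω)
    (a : N.Auto) (i j : N.LS a)
    (π : List (Step N)) (hπ : IsTrace T s π)
    (m n : ℕ) (hmn : m ≤ n) (hn : n < π.length)
    (hi : (⟨a, i⟩ : N.LSt) ∈ (π.get ⟨m, lt_of_le_of_lt hmn hn⟩).pre)
    (hj : (⟨a, j⟩ : N.LSt) ∈ (π.get ⟨n, hn⟩).post) :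
    (⟨a, (i, j)⟩ : Obj N) ∈ Ω := by
  have hm : m < π.length := lt_of_le_of_lt hmn hn
  have hieq : applyTrace s (π.take m) a = i := (hπ m hm).2 ⟨a, i⟩ hi
  have hjeq : applyTrace s (π.take (n + 1)) a = j := by
    obtain ⟨hjmem, hjnot⟩ := hj
    have hpl := (hπ n hn).2
    rw [applyTrace_take_succ hn]
    simp only [Set.mem_iUnion] at hjmem
    obtain ⟨b, t, hτ, hpost⟩ := hjmem
    rcases Set.mem_insert_iff.1 hpost with hEq | henab
    · obtain ⟨rfl, hheq⟩ := Sigma.mk.inj_iff.1 hEq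
      have hjd : j = t.dest := eq_of_heq hheq
      simp [applyStep, hτ, hjd]
    · have hsn : applyTrace s (π.take n) a = j := playable_enab hpl hτ henab
      rcases hτa : (π.get ⟨n, hn⟩) a with _ | t'
      · simpa [applyStep, hτa] using hsn
      · exfalso
        exact hjnot ⟨t', hτa, by rw [← playable_orig hpl hτa, hsn]⟩
  have := prop1_main hΩ.1 hπ (n + 1) (by omega) m (by omega) a
  rw [hieq, hjeq] at this
  exact this
end

section
/- The last step of a minimal trace is the singleton reaching the goal: Let (Σ,S,T) be an automata network, s a global state, and g_⊤ ∈ S(g) a local state with g_⊤ ∉ s. If π is a trace from s that is minimal w.r.t. g_⊤ reachability, then |π| ≥ 1 and the last step π^{|π|} is a singleton {t} for some transition t ∈ T(g) with dest(t) = g_⊤. -/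
/-!
Automata networks (ANs), steps, traces, minimal traces, local causality analysis
and the goal-oriented reduction, following Paulevé, "Goal-Oriented Reduction of
Automata Networks".
-/

universe u v

open AN

/-- A sub-step has a smaller pre-condition. -/
lemma sub_pre_subset {N : AN} {σ τ : Step N} (h : σ.Sub τ) : σ.pre ⊆ τ.pre := by
  intro p hp
  simp only [Step.pre, Set.mem_iUnion] at hp ⊢
  obtain ⟨b, t, ht, hpt⟩ := hp
  exact ⟨b, t, h ht, hpt⟩

/-- If the value of automaton `g` changed along a trace, some step of the
trace contains a transition of `g` whose destination is the final value. -/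
lemma exists_trans_of_apply_ne {N : AN} (s : GState N) (L : List (Step N))
    (g : N.Auto) (h : applyTrace s L g ≠ s g) :
    ∃ k, ∃ hk : k < L.length, ∃ t' : N.Trans g,
      (L.get ⟨k, hk⟩) g = some t' ∧ t'.dest = applyTrace s L g := by
  induction L using List.reverseRecOn with
  | nil => simp [applyTrace] at h
  | append_singleton L τ ih =>
    have happ : applyTrace s (L ++ [τ]) = applyStep (applyTrace s L) τ := by
      simp [applyTrace, List.foldl_append]
    cases hτ : τ g with
    | none =>
      have hval : applyTrace s (L ++ [τ]) g = applyTrace s L g := by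
        rw [happ]; simp [applyStep, hτ]
      rw [hval] at h ⊢
      obtain ⟨k, hk, t', h1, h2⟩ := ih h
      refine ⟨k, by simp; omega, t', ?_, h2⟩
      simpa [List.getElem_append_left hk] using h1
    | some t' =>
      have hval : applyTrace s (L ++ [τ]) g = t'.dest := by
        rw [happ]; simp [applyStep, hτ]
      refine ⟨L.length, by simp, t', ?_, hval.symm⟩
      simp [hτ]

/-- **The last step of a minimal trace is the singleton reaching the goal**:
if `g_⊤ ∉ s` and `π` is minimal w.r.t. `g_⊤` reachability, then `π` is
nonempty and its last step consists of exactly one transition, a transition of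
`T(g)` whose destination is `g_⊤`. -/
theorem minimal_trace_last_step_singleton
    (N : AN) (T : TransMap N) (s : GState N)
    (g : N.Auto) (gtop : N.LS g) (hg : s g ≠ gtop)
    (π : List (Step N)) (hπ : MinimalTrace T s ⟨g, gtop⟩ π) :
    ∃ hne : π ≠ [], ∃ t : N.Trans g, t ∈ T g ∧ t.dest = gtop ∧
      (π.getLast hne) g = some t ∧
      ∀ b : N.Auto, b ≠ g → (π.getLast hne) b = none := by
  obtain ⟨htr, hpost, hmin⟩ := hπ
  -- Step 1: find an index `k` and a transition `t'` of `g` in `π^k`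
  -- whose destination is `gtop`.
  obtain ⟨k, hk, t', hkt, hdest⟩ :
      ∃ k, ∃ hk : k < π.length, ∃ t' : N.Trans g,
        (π.get ⟨k, hk⟩) g = some t' ∧ t'.dest = gtop := by
    obtain ⟨n, hn, ⟨hin, -⟩, -⟩ := hpost
    simp only [Step.post, Set.mem_iUnion] at hin
    obtain ⟨b, t, hbt, hpt⟩ := hin
    rcases hpt with heq | henab
    · -- the goal is the destination of a transition of `g` in `π^n`
      obtain ⟨hb, hd⟩ := Sigma.mk.inj_iff.1 heq
      subst hb
      exact ⟨n, hn, t, hbt, (eq_of_heq hd).symm⟩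
    · -- the goal enables a transition of `π^n`, hence was reached earlier
      have hpre : (⟨g, gtop⟩ : N.LSt) ∈ (π.get ⟨n, hn⟩).pre := by
        simp only [Step.pre, Set.mem_iUnion]
        exact ⟨b, t, hbt, Or.inr henab⟩
      have hsn : applyTrace s (π.take n) g = gtop := (htr n hn).2 _ hpre
      have hne : applyTrace s (π.take n) g ≠ s g := by rw [hsn]; exact fun h => hg h.symm
      obtain ⟨k, hk, t', h1, h2⟩ := exists_trans_of_apply_ne s (π.take n) g hne
      have hkn : k < n := by rw [List.length_take] at hk; omega
      refine ⟨k, lt_trans hkn hn, t', ?_, by rw [h2, hsn]⟩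
      simpa [List.getElem_take] using h1
  -- Step 2: build the candidate shorter/smaller trace `ϖ`.
  set σ : Step N := Function.update (fun a => (none : Option (N.Trans a))) g (some t')
    with hσdef
  have hσg : σ g = some t' := by simp [hσdef]
  have hσb : ∀ b : N.Auto, b ≠ g → σ b = none := fun b hb => by
    simp [hσdef, Function.update_of_ne hb]
  have hsub : σ.Sub (π.get ⟨k, hk⟩) := by
    intro a t hat
    by_cases ha : a = g
    · subst ha
      rw [hσg] at hat
      rw [← hat]; exact hkt
    · rw [hσb a ha] at hat; cases hat
  set ϖ : List (Step N) := π.take k ++ [σ] with hϖdef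
  have hlenk : (π.take k).length = k := by simp [Nat.min_eq_left hk.le]
  have hlen : ϖ.length = k + 1 := by simp [hϖdef, hlenk]
  have hget_lt : ∀ i (hi : i < k), ϖ.get ⟨i, by omega⟩ = π.get ⟨i, by omega⟩ := by
    intro i hi
    simp only [hϖdef, List.get_eq_getElem]
    rw [List.getElem_append_left (by omega), List.getElem_take]
  have hget_k : ϖ.get ⟨k, by omega⟩ = σ := by
    simp only [hϖdef, List.get_eq_getElem]
    rw [List.getElem_append_right (by omega)]
    simp [hlenk]
  have htake : ∀ i, i ≤ k → ϖ.take i = π.take i := by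
    intro i hi
    rw [hϖdef, List.take_append_of_le_length (by omega), List.take_take,
      Nat.min_eq_left hi]
  -- ϖ is a trace
  have hϖtr : IsTrace T s ϖ := by
    intro i hi
    have hik : i ≤ k := by omega
    rcases lt_or_eq_of_le hik with hlt | rfl
    · rw [hget_lt i hlt, htake i hik]
      exact htr i (by omega)
    · rw [hget_k, htake i le_rfl]
      refine ⟨fun a t hat => (htr i hk).1 (hsub hat), fun p hp => ?_⟩
      exact (htr i hk).2 p (sub_pre_subset hsub hp)
  -- the goal is in the post-condition of ϖ
  have hϖpost : (⟨g, gtop⟩ : N.LSt) ∈ tracePost ϖ := by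
    refine ⟨k, by omega, ?_, fun m hm hkm x => by omega⟩
    rw [hget_k]
    constructor
    · simp only [Step.post, Set.mem_iUnion]
      exact ⟨g, t', hσg, Or.inl (by rw [hdest])⟩
    · rintro ⟨t, hσt, horig⟩
      rw [hσg] at hσt
      obtain rfl : t' = t := by injection hσt
      exact t'.orig_ne_dest (by rw [hdest, ← horig])
  -- ϖ is a sub-trace of π
  have hϖsub : SubTrace ϖ π := by
    refine ⟨fun i => ⟨i.1, by have := i.isLt; omega⟩, fun a b hab => hab, ?_⟩
    rintro ⟨iv, hiv⟩
    have hik : iv ≤ k := by omega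
    rcases lt_or_eq_of_le hik with hlt | rfl
    · have e : ϖ.get ⟨iv, hiv⟩ = π.get ⟨iv, by omega⟩ := hget_lt iv hlt
      intro a t h
      rw [e] at h
      exact h
    · have e : ϖ.get ⟨iv, hiv⟩ = σ := hget_k
      intro a t h
      rw [e] at h
      exact hsub h
  -- by minimality, ϖ = π
  have heq : ϖ = π := by
    by_contra hne
    exact hmin ⟨ϖ, hϖtr, hne, by omega, hϖpost, hϖsub⟩
  -- conclude
  have hπlen : π.length = k + 1 := by rw [← heq]; exact hlen
  have hπne : π ≠ [] := by rw [← heq, hϖdef]; simp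
  have hlast : π.getLast hπne = σ := by
    have h1 : π.getLast hπne = π.get ⟨k, hk⟩ := by
      rw [List.getLast_eq_getElem]
      simp only [List.get_eq_getElem]
      congr 1
      omega
    have h2 : π.get ⟨k, hk⟩ = σ := by
      have h3 := hget_k
      rw [List.get_eq_getElem] at h3 ⊢
      simp only [heq] at h3
      exact h3
    rw [h1, h2]
  exact ⟨hπne, t', (htr k hk).1 hkt, hdest, by rw [hlast, hσg],
    fun b hb => by rw [hlast]; exact hσb b hb⟩
end
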